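/- arXiv:0812.2043 — 8 statements merged into one kernel-verified Lean document; each statement's English description precedes it below -/
import Mathlib

section
/- Let A be an F_p-algebra and a ∈ W(A) a Witt vector. For every d ≥ 1, (V(a))^d = F^{d-1}(V^d(a^d)). -/
open WittVector

private theorem stmt3_aux (p : ℕ) [Fact p.Prime] (A : Type*) [CommRing A] [CharP A p]
    (a : WittVector p A) (d : ℕ) (hd : 1 ≤ d) :
    (verschiebung a) ^ d =
      (⇑(WittVector.frobenius (p := p) (R := A)))^[d - 1] ((⇑verschiebung)^[d] (a ^ d)) := by
  have key : ∀ k m (x : WittVector p A),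
      (⇑(WittVector.frobenius (p := p) (R := A)))^[k] ((⇑verschiebung)^[m] x)
        = (⇑verschiebung)^[m] ((⇑(WittVector.frobenius (p := p) (R := A)))^[k] x) := fun k m x =>
    ((verschiebung_frobenius_comm (p := p) (R := A)).iterate_iterate m k x).symm
  induction d with
  | zero => omega
  | succ d ih =>
    rcases Nat.eq_or_lt_of_le hd with h1 | h1
    · simp [← h1]
    · have hd' : 1 ≤ d := by omega
      rw [pow_succ, ih hd', Nat.succ_sub_one, key (d - 1) d]
      calc (⇑verschiebung)^[d] ((⇑WittVector.frobenius)^[d - 1] (a ^ d)) * verschiebung a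
          = (⇑verschiebung)^[d] ((⇑WittVector.frobenius)^[d - 1] (a ^ d)) * (⇑verschiebung)^[1] a := by
            simp
        _ = (⇑verschiebung)^[d + 1]
              ((⇑WittVector.frobenius)^[1] ((⇑WittVector.frobenius)^[d - 1] (a ^ d)) * (⇑WittVector.frobenius)^[d] a) := by
            rw [iterate_verschiebung_mul]
        _ = (⇑verschiebung)^[d + 1] ((⇑WittVector.frobenius)^[d] (a ^ d) * (⇑WittVector.frobenius)^[d] a) := by
            rw [← Function.iterate_add_apply, Nat.add_sub_cancel' hd']
        _ = (⇑verschiebung)^[d + 1] ((⇑WittVector.frobenius)^[d] (a ^ (d + 1))) := by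
            congr 1
            rw [pow_succ, iterate_map_mul]
        _ = (⇑WittVector.frobenius)^[d] ((⇑verschiebung)^[d + 1] (a ^ (d + 1))) := (key d (d + 1) _).symm

/-- For an `𝔽_p`-algebra `A`, `a ∈ W(A)` and `d ≥ 1`, `(V(a))^d = F^{d-1}(V^d(a^d))`. -/
theorem stmt3 (p : ℕ) [Fact p.Prime] (A : Type*) [CommRing A] [Algebra (ZMod p) A]
    (a : WittVector p A) (d : ℕ) (hd : 1 ≤ d) :
    (verschiebung a) ^ d =
      (⇑(frobenius (p := p) (R := A)))^[d - 1] ((⇑verschiebung)^[d] (a ^ d)) := by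
  rcases subsingleton_or_nontrivial A with hA | hA
  · haveI : Subsingleton (WittVector p A) :=
      ⟨fun x y => by ext n; exact Subsingleton.elim _ _⟩
    exact Subsingleton.elim _ _
  · haveI : CharP A p := charP_of_injective_algebraMap' (ZMod p) (A := A) p
    exact stmt3_aux p A a d hd
end

section
/- Let k be a perfect field of characteristic p, A a k-algebra, and Δ ∈ W(k)[X_1,...,X_n] a homogeneous polynomial (form) of degree d ≥ 1. Then for any a_1,...,a_n ∈ W(A), Δ(V(a_1),...,V(a_n)) = F^{d-1}(V^d((FΔ)(a_1,...,a_n))), where FΔ is obtained from Δ by applying the Frobenius of W(k) to its coefficients. -/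
open WittVector

section Aux

variable {p : ℕ} [hp : Fact p.Prime] {R : Type*} [CommRing R]

private lemma aux_versch_mul_versch (x y : WittVector p R) :
    verschiebung x * verschiebung y = (p : WittVector p R) * verschiebung (x * y) := by
  rw [← verschiebung_mul_frobenius x (verschiebung y), frobenius_verschiebung]
  have : x * (y * (p : WittVector p R)) = (p : ℕ) • (x * y) := by
    rw [nsmul_eq_mul]; ring
  rw [this, map_nsmul, nsmul_eq_mul]

private lemma aux_multiset_prod (s : Multiset (WittVector p R)) (hs : s ≠ 0) :
    (s.map (⇑(verschiebung : WittVector p R →+ WittVector p R))).prod =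
      (p : WittVector p R) ^ (Multiset.card s - 1) * verschiebung s.prod := by
  induction s using Multiset.induction with
  | empty => simp at hs
  | cons x s ih =>
    rcases eq_or_ne s 0 with rfl | h
    · simp
    · have hc : 1 ≤ Multiset.card s := Multiset.card_pos.2 h
      rw [Multiset.map_cons, Multiset.prod_cons, ih h, Multiset.prod_cons]
      have hcc : Multiset.card (x ::ₘ s) - 1 = Multiset.card s := by
        rw [Multiset.card_cons]; omega
      rw [hcc, mul_left_comm, aux_versch_mul_versch, ← mul_assoc, mul_comm _ (p : WittVector p R),
        ← pow_succ', Nat.sub_add_cancel hc]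

private lemma aux_frob_iter (d : ℕ) (x : WittVector p R) :
    (⇑(frobenius (p := p) (R := R)))^[d] ((⇑(verschiebung : WittVector p R →+ WittVector p R))^[d + 1] x) =
      (p : WittVector p R) ^ d * verschiebung x := by
  induction d with
  | zero => simp
  | succ d ih =>
    rw [Function.iterate_succ_apply' (⇑(verschiebung : WittVector p R →+ WittVector p R)) (d + 1) x,
      Function.iterate_succ_apply, frobenius_verschiebung, iterate_map_mul, ih]
    have hfp : (⇑(frobenius (p := p) (R := R)))^[d] (p : WittVector p R) = (p : WittVector p R) :=
      Function.iterate_fixed (by simp) d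
    rw [hfp, pow_succ]
    ring

private lemma aux_prod_versch {n : ℕ} (e : Fin n →₀ ℕ) (a : Fin n → WittVector p R)
    (hd : 1 ≤ e.degree) :
    ∏ i ∈ e.support, (verschiebung (a i)) ^ (e i) =
      (p : WittVector p R) ^ (e.degree - 1) *
        verschiebung (∏ i ∈ e.support, (a i) ^ (e i)) := by
  have key : ∀ g : Fin n → WittVector p R,
      (e.toMultiset.map g).prod = ∏ i ∈ e.support, (g i) ^ (e i) := by
    intro g
    rw [Finsupp.toMultiset_map, Finsupp.prod_toMultiset,
      Finsupp.prod_mapDomain_index (fun b => pow_zero b) (fun b m m' => pow_add b m m')]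
    rfl
  have hcard : Multiset.card (e.toMultiset.map a) = e.degree := by
    rw [Multiset.card_map, Finsupp.card_toMultiset]
    rfl
  have hne : e.toMultiset.map a ≠ 0 := by
    intro h
    rw [h] at hcard
    simp at hcard
    omega
  have h1 : ∏ i ∈ e.support, (verschiebung (a i)) ^ (e i) =
      ((e.toMultiset.map a).map (⇑(verschiebung : WittVector p R →+ WittVector p R))).prod := by
    rw [Multiset.map_map]
    exact (key _).symm
  rw [h1, aux_multiset_prod _ hne, hcard, key]

private lemma aux_map_frobenius {S : Type*} [CommRing S] (g : R →+* S)
    (x : WittVector p R) :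
    WittVector.map g (WittVector.frobenius x) = WittVector.frobenius (WittVector.map g x) := by
  ext m
  rw [WittVector.map_coeff, WittVector.coeff_frobenius, WittVector.coeff_frobenius,
    MvPolynomial.map_aeval]
  apply MvPolynomial.eval₂Hom_congr (RingHom.ext_int _ _) _ rfl
  ext1 i
  simp [WittVector.map_coeff]

end Aux

/-- Let `k` be a perfect field of characteristic `p`, `A` a `k`-algebra, and
`Δ ∈ W(k)[X_1,…,X_n]` a form of degree `d ≥ 1`.  Then for all `a_1,…,a_n ∈ W(A)`,
`Δ(V a_1, …, V a_n) = F^{d-1}(V^d((FΔ)(a_1,…,a_n)))`, where `FΔ` is obtained by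
applying the Frobenius of `W(k)` to the coefficients of `Δ`, and `Δ` is evaluated
in `W(A)` via the ring map `W(k) → W(A)` induced by `k → A`. -/
theorem stmt4 (p : ℕ) [Fact p.Prime] (k : Type*) [Field k] [CharP k p] [PerfectRing k p]
    (A : Type*) [CommRing A] [Algebra k A] (n d : ℕ) (hd : 1 ≤ d)
    (Δ : MvPolynomial (Fin n) (WittVector p k)) (hΔ : Δ.IsHomogeneous d)
    (a : Fin n → WittVector p A) :
    MvPolynomial.eval₂ (WittVector.map (algebraMap k A)) (fun i => verschiebung (a i)) Δ =
      (⇑(frobenius (p := p) (R := A)))^[d - 1]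
        ((⇑verschiebung)^[d]
          (MvPolynomial.eval₂ (WittVector.map (algebraMap k A)) a
            (MvPolynomial.map (WittVector.frobenius (p := p) (R := k)) Δ))) := by
  obtain ⟨d', rfl⟩ : ∃ d', d = d' + 1 := ⟨d - 1, (Nat.sub_add_cancel hd).symm⟩
  rw [MvPolynomial.eval₂_map, Nat.add_sub_cancel, aux_frob_iter, MvPolynomial.eval₂_eq,
    MvPolynomial.eval₂_eq, map_sum, Finset.mul_sum]
  refine Finset.sum_congr rfl fun e he => ?_
  have hdeg : e.degree = d' + 1 := by
    have := hΔ (MvPolynomial.mem_support_iff.mp he)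
    rw [Finsupp.degree_eq_weight_one]; exact this
  have h1 : ∏ i ∈ e.support, (verschiebung (a i)) ^ (e i) =
      (p : WittVector p A) ^ d' * verschiebung (∏ i ∈ e.support, (a i) ^ (e i)) := by
    rw [aux_prod_versch e a (by omega), hdeg]
    simp
  rw [h1]
  have h2 : (WittVector.map (algebraMap k A)).comp (frobenius (p := p) (R := k)) (Δ.coeff e) =
      WittVector.frobenius (WittVector.map (algebraMap k A) (Δ.coeff e)) := by
    simpa using aux_map_frobenius (algebraMap k A) (Δ.coeff e)
  rw [h2, mul_comm (WittVector.frobenius _), verschiebung_mul_frobenius]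
  ring
end

section
/- Let Δ ∈ Z_p[X_1,...,X_n] be a homogeneous polynomial of degree d ≥ 1 and A an F_p-algebra. Then for any a_1,...,a_n ∈ W(A), Δ(V(a_1),...,V(a_n)) = F^{d-1}(V^d(Δ(a_1,...,a_n))). -/
open WittVector

section Aux

variable {p : ℕ} [hp : Fact p.Prime] {A : Type*} [CommRing A]

lemma auxV_sum {ι : Type*} (m : ℕ) (s : Finset ι) (g : ι → WittVector p A) :
    (⇑verschiebung)^[m] (∑ i ∈ s, g i) = ∑ i ∈ s, (⇑verschiebung)^[m] (g i) := by
  induction m with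
  | zero => rfl
  | succ m ih =>
      simp only [Function.iterate_succ_apply', ih, map_sum]

lemma auxF_sum {ι : Type*} (m : ℕ) (s : Finset ι) (g : ι → WittVector p A) :
    (⇑(WittVector.frobenius (p := p) (R := A)))^[m] (∑ i ∈ s, g i)
      = ∑ i ∈ s, (⇑(WittVector.frobenius (p := p) (R := A)))^[m] (g i) := by
  induction m with
  | zero => rfl
  | succ m ih =>
      simp only [Function.iterate_succ_apply', ih, map_sum]

lemma auxF_mul (m : ℕ) (x y : WittVector p A) :
    (⇑(WittVector.frobenius (p := p) (R := A)))^[m] (x * y)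
      = (⇑(WittVector.frobenius (p := p) (R := A)))^[m] x
        * (⇑(WittVector.frobenius (p := p) (R := A)))^[m] y := by
  induction m with
  | zero => rfl
  | succ m ih =>
      simp only [Function.iterate_succ_apply', ih, map_mul]

variable [CharP A p]

lemma auxMul (M : Multiset (WittVector p A)) (x : WittVector p A) :
    verschiebung x * (M.map ⇑verschiebung).prod =
      (⇑verschiebung)^[Multiset.card M + 1]
        ((⇑(WittVector.frobenius (p := p) (R := A)))^[Multiset.card M] (x * M.prod)) := by
  induction M using Multiset.induction generalizing x with
  | empty => simp
  | cons y M ih =>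
      rw [Multiset.map_cons, Multiset.prod_cons, mul_left_comm, ih x]
      have h1 : verschiebung y = (⇑(verschiebung (p := p) (R := A)))^[1] y := rfl
      rw [h1, iterate_verschiebung_mul]
      rw [Multiset.card_cons, Multiset.prod_cons]
      congr 1
      · omega
      · rw [← Function.iterate_add_apply, add_comm 1 (Multiset.card M),
          ← auxF_mul, mul_left_comm y x]

lemma auxProd {ι : Type*} (s : Finset ι) (k : ι → ℕ) (a : ι → WittVector p A)
    (d : ℕ) (hd : 1 ≤ d) (hsum : ∑ i ∈ s, k i = d) :
    ∏ i ∈ s, (verschiebung (a i)) ^ (k i) =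
      (⇑verschiebung)^[d]
        ((⇑(WittVector.frobenius (p := p) (R := A)))^[d - 1] (∏ i ∈ s, (a i) ^ (k i))) := by
  classical
  set M : Multiset (WittVector p A) :=
    s.val.bind (fun i => Multiset.replicate (k i) (a i)) with hM
  have hcard : Multiset.card M = d := by
    rw [hM, Multiset.card_bind]
    simpa [Multiset.card_replicate] using hsum
  have hprod : M.prod = ∏ i ∈ s, (a i) ^ (k i) := by
    rw [hM, Multiset.prod_bind, Finset.prod_eq_multiset_prod]
    simp [Multiset.prod_replicate]
  have hprodV : (M.map ⇑verschiebung).prod = ∏ i ∈ s, (verschiebung (a i)) ^ (k i) := by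
    rw [hM, Multiset.map_bind, Finset.prod_eq_multiset_prod, Multiset.prod_bind]
    simp [Multiset.map_replicate, Multiset.prod_replicate]
  have hne : M ≠ 0 := by
    intro h
    rw [h] at hcard
    simp at hcard; omega
  obtain ⟨x, hx⟩ := Multiset.exists_mem_of_ne_zero hne
  have hMx : x ::ₘ M.erase x = M := Multiset.cons_erase hx
  have hce : Multiset.card (M.erase x) = Multiset.card M - 1 := by
    rw [Multiset.card_erase_of_mem hx]; rfl
  have h1 : Multiset.card (M.erase x) + 1 = d := by omega
  have h2 : Multiset.card (M.erase x) = d - 1 := by omega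
  rw [← hprodV, ← hprod, ← hMx, Multiset.map_cons, Multiset.prod_cons, auxMul,
    Multiset.prod_cons, h1, h2]

lemma auxFix (f : ZMod p →+* A) (c : WittVector p (ZMod p)) :
    WittVector.frobenius (WittVector.map f c) = WittVector.map f c := by
  rw [frobenius_eq_map_frobenius]
  ext n
  rw [map_coeff, map_coeff, frobenius_def, ← map_pow, ZMod.pow_card]

lemma auxFixIter (f : ZMod p →+* A) (c : WittVector p (ZMod p)) (m : ℕ) :
    (⇑(WittVector.frobenius (p := p) (R := A)))^[m] (WittVector.map f c)
      = WittVector.map f c := by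
  induction m with
  | zero => rfl
  | succ m ih => rw [Function.iterate_succ_apply', ih, auxFix]

end Aux

/-- Let `Δ ∈ ℤ_p[X_1,…,X_n]` (with `ℤ_p = W(𝔽_p)`) be a homogeneous polynomial of
degree `d ≥ 1` and `A` an `𝔽_p`-algebra.  Then for all `a_1,…,a_n ∈ W(A)`,
`Δ(V a_1, …, V a_n) = F^{d-1}(V^d(Δ(a_1,…,a_n)))`. -/
theorem stmt5 (p : ℕ) [Fact p.Prime] (A : Type*) [CommRing A] [Algebra (ZMod p) A]
    (n d : ℕ) (hd : 1 ≤ d)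
    (Δ : MvPolynomial (Fin n) (WittVector p (ZMod p))) (hΔ : Δ.IsHomogeneous d)
    (a : Fin n → WittVector p A) :
    MvPolynomial.eval₂ (WittVector.map (algebraMap (ZMod p) A))
        (fun i => verschiebung (a i)) Δ =
      (⇑(frobenius (p := p) (R := A)))^[d - 1]
        ((⇑verschiebung)^[d]
          (MvPolynomial.eval₂ (WittVector.map (algebraMap (ZMod p) A)) a Δ)) := by
  rcases subsingleton_or_nontrivial A with hA | hA
  · haveI : Subsingleton (WittVector p A) :=
      ⟨fun x y => by ext n; exact Subsingleton.elim _ _⟩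
    exact Subsingleton.elim _ _
  haveI : CharP A p :=
    charP_of_injective_ringHom (algebraMap (ZMod p) A).injective p
  rw [MvPolynomial.eval₂_eq, MvPolynomial.eval₂_eq,
    auxV_sum (p := p) (A := A) d Δ.support
      (fun m => (WittVector.map (algebraMap (ZMod p) A)) (MvPolynomial.coeff m Δ)
        * ∏ i ∈ m.support, (a i) ^ (m i)),
    auxF_sum (p := p) (A := A) (d - 1) Δ.support]
  refine Finset.sum_congr rfl (fun m hm => ?_)
  have hdeg : ∑ i ∈ m.support, m i = d := by
    have := hΔ (MvPolynomial.mem_support_iff.mp hm)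
    rw [← this]
    show _ = Finsupp.weight (fun _ => 1) m
    rw [← Finsupp.degree_eq_weight_one]
    rfl
  set f := WittVector.map (p := p) (algebraMap (ZMod p) A) with hf
  set c := MvPolynomial.coeff m Δ with hc
  set Q := ∏ i ∈ m.support, (a i) ^ (m i) with hQ
  calc f c * ∏ i ∈ m.support, (verschiebung (a i)) ^ (m i)
      = f c * (⇑verschiebung)^[d] ((⇑WittVector.frobenius)^[d - 1] Q) := by
        rw [auxProd m.support m a d hd hdeg]
    _ = (⇑verschiebung)^[d] ((⇑WittVector.frobenius)^[d - 1] Q) * f c := mul_comm _ _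
    _ = (⇑verschiebung)^[d]
          ((⇑WittVector.frobenius)^[d - 1] Q * (⇑WittVector.frobenius)^[d] (f c)) :=
        iterate_verschiebung_mul_left _ _ _
    _ = (⇑verschiebung)^[d]
          ((⇑WittVector.frobenius)^[d - 1] Q * (⇑WittVector.frobenius)^[d - 1] (f c)) := by
        rw [auxFixIter, auxFixIter]
    _ = (⇑verschiebung)^[d] ((⇑WittVector.frobenius)^[d - 1] (Q * f c)) := by
        rw [auxF_mul]
    _ = (⇑WittVector.frobenius)^[d - 1] ((⇑verschiebung)^[d] (Q * f c)) :=
        ((verschiebung_frobenius_comm (R := A)).iterate_iterate d (d - 1)) _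
    _ = (⇑WittVector.frobenius)^[d - 1] ((⇑verschiebung)^[d] (f c * Q)) := by
        rw [mul_comm Q]
end

section
/- Let p = 2 and A an F_2-algebra. If x, y ∈ W(A) have equal 0-th coordinates x_0 = y_0, then x − y = V(x̃ − ỹ), where x̃ = (x_1, x_2, ...) is the shift of x and similarly for ỹ. -/
open WittVector MvPolynomial Finset

section Aux

variable (p : ℕ) [hp : Fact p.Prime]

private theorem teich_isPoly :
    WittVector.IsPoly p (fun _ _ x => WittVector.teichmuller p (x.coeff 0)) :=
  ⟨⟨fun n => if n = 0 then X 0 else 0, by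
    intro R _ x
    funext n
    cases n with
    | zero => simp
    | succ n => simp [teichmuller_coeff_pos p _ (n + 1) n.succ_pos]⟩⟩

private theorem tail_isPoly :
    WittVector.IsPoly p (fun _ _ x => WittVector.mk p fun n => x.coeff (n + 1)) :=
  ⟨⟨fun n => X (n + 1), by intro R _ x; funext n; simp [WittVector.coeff_mk]⟩⟩

private theorem decomp {R : Type u} [CommRing R] (x : WittVector p R) :
    x = WittVector.teichmuller p (x.coeff 0) +
      verschiebung (WittVector.mk p fun n => x.coeff (n + 1)) := by
  haveI h1 := teich_isPoly p
  haveI h2 := tail_isPoly p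
  haveI h3 : WittVector.IsPoly p
      (fun _ _ x => verschiebung (WittVector.mk p fun n => x.coeff (n + 1))) :=
    WittVector.IsPoly.comp (hg := verschiebung_isPoly) (hf := h2)
  haveI h4 : WittVector.IsPoly p (fun _ _ x =>
      WittVector.teichmuller p (x.coeff 0) +
        verschiebung (WittVector.mk p fun n => x.coeff (n + 1))) := by
    exact WittVector.IsPoly₂.diag
      (f := fun _ _ x y => WittVector.teichmuller p (x.coeff 0) +
        verschiebung (WittVector.mk p fun n => y.coeff (n + 1)))
  refine WittVector.IsPoly.ext (WittVector.idIsPolyI' p) h4 ?_ R x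
  intro R _ x n
  rw [map_add, ghostComponent_teichmuller]
  cases n with
  | zero =>
    rw [ghostComponent_zero_verschiebung]
    simp [ghostComponent_apply, aeval_wittPolynomial]
  | succ n =>
    rw [ghostComponent_verschiebung]
    simp only [ghostComponent_apply, aeval_wittPolynomial, WittVector.coeff_mk]
    rw [Finset.sum_range_succ', Finset.mul_sum]
    simp only [pow_zero, one_mul, pow_succ, Nat.succ_sub_succ_eq_sub]
    rw [add_comm]
    congr 1
    exact Finset.sum_congr rfl fun i _ => by ring

end Aux

/-- Let `A` be an `𝔽_2`-algebra.  If `x, y ∈ W(A)` (2-typical Witt vectors) have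
equal 0-th coordinates, then `x - y = V(x̃ - ỹ)`, where `x̃ = (x₁, x₂, …)` is the
shift of `x = (x₀, x₁, …)`. -/
theorem stmt8 (A : Type*) [CommRing A] [Algebra (ZMod 2) A]
    (x y : WittVector 2 A) (h : x.coeff 0 = y.coeff 0) :
    x - y =
      verschiebung
        (WittVector.mk 2 (fun n => x.coeff (n + 1)) -
          WittVector.mk 2 (fun n => y.coeff (n + 1))) := by
  conv_lhs => rw [decomp 2 x, decomp 2 y]
  rw [h, map_sub]
  abel
end

section
/- Let p be a prime and f ∈ Z_p[X] a polynomial whose reduction f̄ ∈ F_p[X] is separable and non-constant. Then ∫_{Z_p} |f(x)|_p dx = 1 − m/(p+1), where m is the number of roots of f̄ in F_p and dx is the Haar probability measure on Z_p. -/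
open MeasureTheory PadicInt Function Set
open scoped ENNReal

set_option linter.unusedSectionVars false
namespace Stmt12Aux

variable {p : ℕ} [hp : Fact p.Prime] [MeasurableSpace ℤ_[p]] [BorelSpace ℤ_[p]]
  (μ : Measure ℤ_[p]) [μ.IsAddHaarMeasure] [IsProbabilityMeasure μ]

lemma norm_eq_one_iff (z : ℤ_[p]) : ‖z‖ = 1 ↔ PadicInt.toZMod z ≠ 0 := by
  have hker : PadicInt.toZMod z = 0 ↔ ‖z‖ < 1 := by
    rw [← RingHom.mem_ker, PadicInt.ker_toZMod, PadicInt.norm_lt_one_iff_dvd,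
      PadicInt.maximalIdeal_eq_span_p, Ideal.mem_span_singleton]
  constructor
  · intro h1 h0
    rw [hker] at h0; rw [h1] at h0; exact lt_irrefl _ h0
  · intro h
    refine le_antisymm (PadicInt.norm_le_one z) ?_
    by_contra hlt
    push_neg at hlt
    exact h (hker.2 hlt)

lemma red_eval (f : Polynomial ℤ_[p]) (x : ℤ_[p]) :
    (f.map (PadicInt.toZMod (p := p))).eval (PadicInt.toZMod x) = PadicInt.toZMod (f.eval x) := by
  rw [Polynomial.eval_map, Polynomial.eval₂_at_apply]

/-- Generic fiber-measure lemma. -/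
lemma measure_fiber {R : Type*} [CommRing R] [Fintype R] (φ : ℤ_[p] →+* R)
    (hsurj : Function.Surjective φ) (hcl : IsClosed (φ ⁻¹' {0})) (c : R) :
    μ (φ ⁻¹' {c}) = (Fintype.card R : ℝ≥0∞)⁻¹ := by
  have hshift : ∀ c : R, ∃ e : ℤ_[p], φ ⁻¹' {c} = (fun x => e + x) ⁻¹' (φ ⁻¹' {0}) := by
    intro c
    obtain ⟨e, he⟩ := hsurj (-c)
    refine ⟨e, ?_⟩
    ext x
    simp only [Set.mem_preimage, Set.mem_singleton_iff, map_add, he]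
    constructor
    · intro h; rw [h]; ring
    · intro h; linear_combination h
  have hmc : ∀ c : R, MeasurableSet (φ ⁻¹' {c}) := by
    intro c
    obtain ⟨e, he⟩ := hshift c
    rw [he]
    exact hcl.measurableSet.preimage (measurable_const_add e)
  have key : ∀ c : R, μ (φ ⁻¹' {c}) = μ (φ ⁻¹' {0}) := by
    intro c
    obtain ⟨e, he⟩ := hshift c
    rw [he, measure_preimage_add]
  have hdisj : Pairwise (Function.onFun Disjoint fun c : R => φ ⁻¹' {c}) := by
    intro a b hab
    simp only [Function.onFun, Set.disjoint_left]
    intro x hxa hxb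
    exact hab (by rw [← hxa, ← hxb])
  have huniv : ⋃ c : R, φ ⁻¹' {c} = Set.univ := by
    ext x; simp
  have h1 : (1 : ℝ≥0∞) = (Fintype.card R : ℝ≥0∞) * μ (φ ⁻¹' {0}) := by
    have := measure_iUnion (μ := μ) hdisj hmc
    rw [huniv, measure_univ, tsum_fintype] at this
    simp only [key] at this
    rw [Finset.sum_const, Finset.card_univ, nsmul_eq_mul] at this
    exact this
  have hcard0 : (Fintype.card R : ℝ≥0∞) ≠ 0 := by
    simp [Fintype.card_ne_zero]
  have hcardt : (Fintype.card R : ℝ≥0∞) ≠ ⊤ := by simp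
  rw [key c]
  calc μ (φ ⁻¹' {0}) = (Fintype.card R : ℝ≥0∞)⁻¹ * ((Fintype.card R : ℝ≥0∞) * μ (φ ⁻¹' {0})) := by
        rw [← mul_assoc, ENNReal.inv_mul_cancel hcard0 hcardt, one_mul]
    _ = (Fintype.card R : ℝ≥0∞)⁻¹ := by rw [← h1, mul_one]


variable {p : ℕ} [hp : Fact p.Prime] [MeasurableSpace ℤ_[p]] [BorelSpace ℤ_[p]]
  (μ : Measure ℤ_[p]) [μ.IsAddHaarMeasure] [IsProbabilityMeasure μ]

lemma toZModPow_surjective (k : ℕ) : Function.Surjective (toZModPow (p := p) k) := by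
  haveI : NeZero (p ^ k) := ⟨pow_ne_zero k hp.out.ne_zero⟩
  intro c
  exact ⟨(c.val : ℤ_[p]), by rw [map_natCast]; exact ZMod.natCast_zmod_val c⟩

lemma toZMod_surjective : Function.Surjective (toZMod (p := p)) := by
  haveI : NeZero p := ⟨hp.out.ne_zero⟩
  intro c
  exact ⟨(c.val : ℤ_[p]), by rw [map_natCast]; exact ZMod.natCast_zmod_val c⟩

lemma fiber_zero_eq (k : ℕ) :
    ((toZModPow k : ℤ_[p] →+* ZMod (p^k)) ⁻¹' {0}) = {x : ℤ_[p] | ‖x‖ ≤ (p:ℝ) ^ (-(k:ℤ))} := by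
  ext x
  simp only [Set.mem_preimage, Set.mem_singleton_iff, Set.mem_setOf_eq,
    PadicInt.norm_le_pow_iff_mem_span_pow, ← PadicInt.ker_toZModPow, RingHom.mem_ker]

lemma fiber_zero_closed (k : ℕ) : IsClosed ((toZModPow k : ℤ_[p] →+* ZMod (p^k)) ⁻¹' {0}) := by
  rw [fiber_zero_eq]
  exact isClosed_le continuous_norm continuous_const

lemma ball_measurable (k : ℕ) : MeasurableSet {x : ℤ_[p] | ‖x‖ ≤ (p:ℝ) ^ (-(k:ℤ))} := by
  rw [← fiber_zero_eq]
  exact (fiber_zero_closed k).measurableSet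

lemma cont_integrable (g : ℤ_[p] → ℝ) (hg : Continuous g) : Integrable g μ := by
  apply hg.integrable_of_hasCompactSupport
  exact IsCompact.of_isClosed_subset isCompact_univ (isClosed_tsupport g) (Set.subset_univ _)


lemma measure_ball (k : ℕ) :
    μ {x : ℤ_[p] | ‖x‖ ≤ (p:ℝ) ^ (-(k:ℤ))} = ((p : ℝ≥0∞) ^ k)⁻¹ := by
  haveI : NeZero (p ^ k) := ⟨pow_ne_zero k hp.out.ne_zero⟩
  rw [← fiber_zero_eq,
    measure_fiber μ _ (toZModPow_surjective k) (fiber_zero_closed k) 0]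
  rw [ZMod.card]
  push_cast
  rfl

lemma measure_ball_toReal (k : ℕ) :
    (μ {x : ℤ_[p] | ‖x‖ ≤ (p:ℝ) ^ (-(k:ℤ))}).toReal = ((p:ℝ)⁻¹) ^ k := by
  rw [measure_ball, ENNReal.toReal_inv, ENNReal.toReal_pow, ENNReal.toReal_natCast, inv_pow]



lemma norm_eq_of_mem_T (k : ℕ) (x : ℤ_[p])
    (h1 : ‖x‖ ≤ (p:ℝ) ^ (-((k+1:ℕ):ℤ))) (h2 : ¬ ‖x‖ ≤ (p:ℝ) ^ (-((k+2:ℕ):ℤ))) :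
    ‖x‖ = (p:ℝ) ^ (-((k+1:ℕ):ℤ)) := by
  refine le_antisymm h1 ?_
  rw [PadicInt.norm_le_pow_iff_norm_lt_pow_add_one] at h2
  push_neg at h2
  have he : (-((k+2:ℕ):ℤ) + 1) = -((k+1:ℕ):ℤ) := by push_cast; ring
  rwa [he] at h2

lemma integral_norm_ball :
    ∫ x in {x : ℤ_[p] | ‖x‖ ≤ (p:ℝ) ^ (-(1:ℤ))}, ‖x‖ ∂μ = ((p:ℝ) * ((p:ℝ)+1))⁻¹ := by
  have hp1 : (1:ℝ) < p := by exact_mod_cast hp.out.one_lt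
  have hp0 : (0:ℝ) < p := by positivity
  set r : ℝ := (p:ℝ)⁻¹ with hr
  have hr0 : 0 < r := by positivity
  have hr1 : r < 1 := by
    rw [hr, inv_lt_one_iff₀]; right; exact hp1
  set B : ℕ → Set ℤ_[p] := fun k => {x | ‖x‖ ≤ (p:ℝ) ^ (-(k:ℤ))} with hB
  set T : ℕ → Set ℤ_[p] := fun k => B (k+1) \ B (k+2) with hT
  have hBm : ∀ k, MeasurableSet (B k) := fun k => ball_measurable k
  have hTm : ∀ k, MeasurableSet (T k) := fun k => (hBm _).diff (hBm _)
  have hBanti : ∀ j k : ℕ, j ≤ k → B k ⊆ B j := by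
    intro j k hjk x hx
    refine le_trans hx (zpow_le_zpow_right₀ hp1.le ?_)
    omega
  have hint : Integrable (fun x : ℤ_[p] => ‖x‖) μ := cont_integrable μ _ continuous_norm
  -- decomposition
  have hdecomp : B 1 = {(0:ℤ_[p])} ∪ ⋃ k, T k := by
    ext x
    simp only [Set.mem_union, Set.mem_singleton_iff, Set.mem_iUnion]
    constructor
    · intro hx
      by_cases hx0 : x = 0
      · exact Or.inl hx0
      · right
        have hval : ‖x‖ = (p:ℝ) ^ (-(x.valuation : ℤ)) := PadicInt.norm_eq_zpow_neg_valuation hx0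
        have hv1 : 1 ≤ x.valuation := by
          have : (p:ℝ) ^ (-(x.valuation : ℤ)) ≤ (p:ℝ) ^ (-(1:ℤ)) := by
            rw [← hval]; exact hx
          rw [zpow_le_zpow_iff_right₀ hp1] at this
          omega
        refine ⟨((x.valuation : ℤ) - 1).toNat, ?_, ?_⟩
        · show ‖x‖ ≤ (p:ℝ) ^ (-((((x.valuation : ℤ) - 1).toNat : ℤ) + 1))
          rw [hval]
          apply zpow_le_zpow_right₀ hp1.le
          omega
        · show ¬ ‖x‖ ≤ (p:ℝ) ^ (-((((x.valuation : ℤ) - 1).toNat : ℤ) + 2))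
          rw [hval, zpow_le_zpow_iff_right₀ hp1]
          omega
    · intro hx
      rcases hx with hx | ⟨k, hk, -⟩
      · show ‖x‖ ≤ (p:ℝ) ^ (-((1:ℕ):ℤ))
        rw [hx, norm_zero]
        positivity
      · exact hBanti 1 (k+1) (by omega) hk
  have hTdisj : Pairwise (Function.onFun Disjoint T) := by
    have key : ∀ a b : ℕ, a < b → Disjoint (T a) (T b) := by
      intro a b hab
      rw [Set.disjoint_left]
      rintro x ⟨-, hx2⟩ ⟨hx3, -⟩
      exact hx2 (hBanti (a+2) (b+1) (by omega) hx3)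
    intro a b hab
    rcases lt_or_gt_of_ne hab with h | h
    · exact key a b h
    · exact (key b a h).symm
  have h0T : Disjoint ({(0:ℤ_[p])} : Set ℤ_[p]) (⋃ k, T k) := by
    rw [Set.disjoint_left]
    intro x hx hxU
    rw [Set.mem_singleton_iff] at hx
    rw [Set.mem_iUnion] at hxU
    obtain ⟨k, -, hk2⟩ := hxU
    refine hk2 ?_
    show ‖x‖ ≤ (p:ℝ) ^ (-((k+2:ℕ):ℤ))
    rw [hx, norm_zero]
    positivity
  have hstart : {x : ℤ_[p] | ‖x‖ ≤ (p:ℝ) ^ (-(1:ℤ))} = B 1 := by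
    rw [hB]; norm_num
  rw [hstart, hdecomp,
    setIntegral_union h0T (MeasurableSet.iUnion hTm) hint.integrableOn hint.integrableOn]
  have h0 : ∫ x in ({(0:ℤ_[p])} : Set ℤ_[p]), ‖x‖ ∂μ = 0 := by
    rw [setIntegral_congr_fun (isClosed_singleton.measurableSet)
      (fun x hx => by rw [Set.mem_singleton_iff] at hx; simp [hx] : 
        Set.EqOn (fun x : ℤ_[p] => ‖x‖) (fun _ => (0:ℝ)) {0})]
    simp
  rw [h0, zero_add, integral_iUnion hTm hTdisj hint.integrableOn]
  have hμB : ∀ k : ℕ, (μ (B k)).toReal = r ^ k := by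
    intro k
    rw [hB]
    exact measure_ball_toReal μ k
  have hTint : ∀ k : ℕ, ∫ x in T k, ‖x‖ ∂μ = ((1-r)*r^2) * (r^2)^k := by
    intro k
    have hconst : Set.EqOn (fun x : ℤ_[p] => ‖x‖)
        (fun _ => (p:ℝ) ^ (-((k+1:ℕ):ℤ))) (T k) := by
      intro x hx
      exact norm_eq_of_mem_T k x hx.1 hx.2
    rw [setIntegral_congr_fun (hTm k) hconst, setIntegral_const, smul_eq_mul]
    have hsub := hBanti (k+1) (k+2) (by omega)
    have hμT : μ (T k) = μ (B (k+1)) - μ (B (k+2)) :=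
      measure_diff hsub (hBm _).nullMeasurableSet (measure_ne_top μ _)
    have htr : (μ (T k)).toReal = r^(k+1) - r^(k+2) := by
      rw [hμT, ENNReal.toReal_sub_of_le (measure_mono hsub) (measure_ne_top μ _),
        hμB, hμB]
    rw [measureReal_def, htr]
    have hpz : (p:ℝ) ^ (-((k+1:ℕ):ℤ)) = r^(k+1) := by
      rw [hr, inv_pow, ← zpow_natCast (p:ℝ) (k+1), ← zpow_neg]
    rw [hpz]
    ring
  have hsum : ∑' k : ℕ, ∫ x in T k, ‖x‖ ∂μ = ((1-r)*r^2) * (1 - r^2)⁻¹ := by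
    simp only [hTint]
    rw [tsum_mul_left, tsum_geometric_of_lt_one (by positivity) (by nlinarith)]
  rw [hsum]
  have h2 : 1 - r^2 = (1-r)*(1+r) := by ring
  have h1r : 1 - r ≠ 0 := by intro h; nlinarith
  have h1r' : 1 + r ≠ 0 := by positivity
  rw [h2, ← div_eq_mul_inv, inv_eq_one_div]
  have hb : (0:ℝ) < (1-r)*(1+r) := by nlinarith
  rw [div_eq_div_iff hb.ne' (by positivity)]
  rw [hr]
  have hpne : (p:ℝ) ≠ 0 := ne_of_gt hp0
  field_simp


lemma norm_lt_one_iff' (z : ℤ_[p]) : ‖z‖ < 1 ↔ PadicInt.toZMod z = 0 := by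
  constructor
  · intro hlt
    by_contra hne
    have := (norm_eq_one_iff z).2 hne
    linarith
  · intro h0
    rcases lt_or_eq_of_le (PadicInt.norm_le_one z) with h | h
    · exact h
    · exact absurd h0 ((norm_eq_one_iff z).1 h)

end Stmt12Aux

open Stmt12Aux in
/-- Let `f ∈ ℤ_p[X]` be a polynomial whose reduction `f̄ ∈ 𝔽_p[X]` is separable and
non-constant.  Then `∫_{ℤ_p} |f(x)|_p dx = 1 − m/(p+1)`, where `m` is the number of
roots of `f̄` in `𝔽_p` and the integral is against the Haar probability measure. -/
theorem stmt12 (p : ℕ) [Fact p.Prime] [MeasurableSpace ℤ_[p]] [BorelSpace ℤ_[p]]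
    (μ : Measure ℤ_[p]) [μ.IsAddHaarMeasure] [IsProbabilityMeasure μ]
    (f : Polynomial ℤ_[p])
    (hsep : (f.map (PadicInt.toZMod (p := p))).Separable)
    (hdeg : 0 < (f.map (PadicInt.toZMod (p := p))).natDegree) :
    ∫ x, ‖f.eval x‖ ∂μ =
      1 - ((Finset.univ.filter
        fun a : ZMod p => (f.map (PadicInt.toZMod (p := p))).eval a = 0).card : ℝ)
          / (p + 1) := by
  classical
  haveI : NeZero p := ⟨(Fact.out : p.Prime).ne_zero⟩
  have hp1 : (1:ℝ) < p := by exact_mod_cast (Fact.out : p.Prime).one_lt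
  have hp0 : (0:ℝ) < p := by positivity
  set fb := f.map (PadicInt.toZMod (p := p)) with hfb
  set C : ZMod p → Set ℤ_[p] := fun a => (PadicInt.toZMod (p := p)) ⁻¹' {a} with hC
  have hC0 : C 0 = {x : ℤ_[p] | ‖x‖ ≤ (p:ℝ) ^ (-(1:ℤ))} := by
    ext x
    rw [hC]
    simp only [Set.mem_preimage, Set.mem_singleton_iff, Set.mem_setOf_eq]
    rw [← RingHom.mem_ker, PadicInt.ker_toZMod, PadicInt.maximalIdeal_eq_span_p,
      show (-(1:ℤ)) = -((1:ℕ):ℤ) by norm_num, PadicInt.norm_le_pow_iff_mem_span_pow,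
      pow_one]
  have hC0closed : IsClosed (C 0) := by
    rw [hC0]; exact isClosed_le continuous_norm continuous_const
  have hlift : ∀ a : ZMod p, PadicInt.toZMod ((a.val : ℤ_[p])) = a := fun a => by
    rw [map_natCast]; exact ZMod.natCast_zmod_val a
  have hCa_eq : ∀ a : ZMod p, C a = (fun x => x - (a.val : ℤ_[p])) ⁻¹' (C 0) := by
    intro a
    ext x
    simp only [hC, Set.mem_preimage, Set.mem_singleton_iff, map_sub, hlift, sub_eq_zero]
  have hCm : ∀ a : ZMod p, MeasurableSet (C a) := by
    intro a
    rw [hCa_eq a]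
    exact hC0closed.measurableSet.preimage (measurable_id.sub measurable_const)
  have hμC : ∀ a : ZMod p, (μ (C a)).toReal = (p:ℝ)⁻¹ := by
    intro a
    rw [hC]
    rw [measure_fiber μ _ toZMod_surjective hC0closed a]
    rw [ZMod.card, ENNReal.toReal_inv, ENNReal.toReal_natCast]
  have hint : Integrable (fun x : ℤ_[p] => ‖f.eval x‖) μ :=
    cont_integrable μ _ f.continuous.norm
  have hCuniv : ⋃ a : ZMod p, C a = Set.univ := by
    ext x; simp [hC]
  have hCdisj : Pairwise (Function.onFun Disjoint C) := by
    intro a b hab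
    simp only [Function.onFun, hC, Set.disjoint_left, Set.mem_preimage,
      Set.mem_singleton_iff]
    intro x hxa hxb
    exact hab (by rw [← hxa, hxb])
  have hred : ∀ (q : Polynomial ℤ_[p]) (x : ℤ_[p]),
      PadicInt.toZMod (q.eval x) = (q.map (PadicInt.toZMod (p := p))).eval (PadicInt.toZMod x) :=
    fun q x => (red_eval q x).symm
  have hsplit : ∫ x, ‖f.eval x‖ ∂μ = ∑ a : ZMod p, ∫ x in C a, ‖f.eval x‖ ∂μ := by
    rw [← setIntegral_univ, ← hCuniv, integral_iUnion hCm hCdisj hint.integrableOn,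
      tsum_fintype]
  have hno : ∀ a : ZMod p, ¬ fb.eval a = 0 →
      ∫ x in C a, ‖f.eval x‖ ∂μ = (p:ℝ)⁻¹ := by
    intro a ha
    have heq : Set.EqOn (fun x : ℤ_[p] => ‖f.eval x‖) (fun _ => (1:ℝ)) (C a) := by
      intro x hx
      have hx' : PadicInt.toZMod x = a := hx
      show ‖f.eval x‖ = 1
      rw [norm_eq_one_iff, hred f x, hx']
      exact ha
    rw [setIntegral_congr_fun (hCm a) heq, setIntegral_const, smul_eq_mul, mul_one, measureReal_def, hμC a]
  have hyes : ∀ a : ZMod p, fb.eval a = 0 →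
      ∫ x in C a, ‖f.eval x‖ ∂μ = ((p:ℝ) * ((p:ℝ)+1))⁻¹ := by
    intro a ha
    have hder : fb.derivative.eval a ≠ 0 := by
      obtain ⟨u, v, huv⟩ := hsep
      intro h0
      have h := congrArg (Polynomial.eval a) huv
      simp only [Polynomial.eval_add, Polynomial.eval_mul, Polynomial.eval_one, ha, h0,
        mul_zero, add_zero, zero_add] at h
      exact zero_ne_one h
    set ahat : ℤ_[p] := (a.val : ℤ_[p]) with hahatdef
    have hahata : PadicInt.toZMod ahat = a := hlift a
    have hfahat : ‖f.eval ahat‖ < 1 := by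
      rw [norm_lt_one_iff', hred f ahat, hahata]
      exact ha
    have hdahat : ‖f.derivative.eval ahat‖ = 1 := by
      rw [norm_eq_one_iff, hred f.derivative ahat, hahata, ← Polynomial.derivative_map]
      exact hder
    obtain ⟨α, hα0, hαclose, hαder, -⟩ :=
      hensels_lemma (F := f) (a := ahat) (by rw [Polynomial.coe_aeval_eq_eval, hdahat, one_pow]; exact hfahat)
    simp only [Polynomial.coe_aeval_eq_eval] at hα0 hαclose hαder
    rw [hdahat] at hαclose hαder
    have hαa : PadicInt.toZMod α = a := by
      have h1 : PadicInt.toZMod (α - ahat) = 0 := (norm_lt_one_iff' _).1 hαclose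
      rw [map_sub, hahata, sub_eq_zero] at h1
      exact h1
    obtain ⟨g, hg⟩ := (Polynomial.dvd_iff_isRoot.2 hα0 : (Polynomial.X - Polynomial.C α) ∣ f)
    have hfd : f.derivative.eval α = g.eval α := by
      rw [hg]
      simp [Polynomial.derivative_mul]
    have hgα : ‖g.eval α‖ = 1 := by rw [← hfd]; exact hαder
    have hnorm_on : Set.EqOn (fun x : ℤ_[p] => ‖f.eval x‖) (fun x => ‖x - α‖) (C a) := by
      intro x hx
      have hx' : PadicInt.toZMod x = a := hx
      show ‖f.eval x‖ = ‖x - α‖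
      have hgx : ‖g.eval x‖ = 1 := by
        rw [norm_eq_one_iff, hred g x, hx', ← hαa, red_eval, ← norm_eq_one_iff]
        exact hgα
      rw [hg, Polynomial.eval_mul, Polynomial.eval_sub, Polynomial.eval_X,
        Polynomial.eval_C, norm_mul, hgx, mul_one]
    rw [setIntegral_congr_fun (hCm a) hnorm_on]
    have himg : C a = (fun x => x + α) '' (C 0) := by
      ext x
      constructor
      · intro hx
        have hx' : PadicInt.toZMod x = a := hx
        refine ⟨x - α, ?_, by ring⟩
        show PadicInt.toZMod (x - α) = 0
        rw [map_sub, hx', hαa, sub_self]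
      · rintro ⟨y, hy, rfl⟩
        have hy' : PadicInt.toZMod y = 0 := hy
        show PadicInt.toZMod (y + α) = a
        rw [map_add, hy', zero_add, hαa]
    rw [himg,
      (measurePreserving_add_right μ α).setIntegral_image_emb
        (measurableEmbedding_addRight α) _ _]
    have : ∀ x : ℤ_[p], ‖x + α - α‖ = ‖x‖ := fun x => by rw [add_sub_cancel_right]
    simp only [this]
    have hC0' : C 0 = {x : ℤ_[p] | ‖x‖ ≤ (p:ℝ) ^ (-(1:ℤ))} := hC0
    rw [hC0']
    exact integral_norm_ball μ
  rw [hsplit, ← Finset.sum_filter_add_sum_filter_not Finset.univ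
    (fun a : ZMod p => fb.eval a = 0) (fun a => ∫ x in C a, ‖f.eval x‖ ∂μ)]
  rw [Finset.sum_congr rfl (fun a ha => hyes a (Finset.mem_filter.mp ha).2)]
  rw [Finset.sum_congr rfl (fun a ha => hno a ((Finset.mem_filter.mp ha).2))]
  rw [Finset.sum_const, Finset.sum_const, nsmul_eq_mul, nsmul_eq_mul]
  have hcards : (Finset.univ.filter fun a : ZMod p => fb.eval a = 0).card
      + (Finset.univ.filter fun a : ZMod p => ¬ fb.eval a = 0).card = p := by
    rw [Finset.card_filter_add_card_filter_not, Finset.card_univ, ZMod.card]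
  set m : ℕ := (Finset.univ.filter fun a : ZMod p => fb.eval a = 0).card with hm
  have hn : ((Finset.univ.filter fun a : ZMod p => ¬ fb.eval a = 0).card : ℝ) = p - m := by
    have : ((m : ℝ) + (Finset.univ.filter fun a : ZMod p => ¬ fb.eval a = 0).card) = p := by
      exact_mod_cast congrArg (Nat.cast : ℕ → ℝ) hcards
    linarith
  rw [hn]
  have hpn : (p:ℝ) ≠ 0 := ne_of_gt hp0
  have hpn1 : (p:ℝ) + 1 ≠ 0 := by positivity
  field_simp
  ring
end

section
/- Let p be a prime and f ∈ Z_p[X] such that the reduction f̄ ∈ F_p[X] is separable and non-constant. Then for every n ≥ 1, the Haar measure of the set {x ∈ Z_p : v_p(f(x)) ≥ n} equals m·p^{-n}, where m is the number of roots of f̄ in F_p. -/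
open MeasureTheory Polynomial

/-- Let `f ∈ ℤ_p[X]` have separable non-constant reduction `f̄ ∈ 𝔽_p[X]`.  Then for
every `n ≥ 1` the Haar measure of `{x ∈ ℤ_p : v_p(f(x)) ≥ n}` equals `m·p^{-n}`,
where `m` is the number of roots of `f̄` in `𝔽_p`. -/
theorem stmt13 (p : ℕ) [Fact p.Prime] [MeasurableSpace ℤ_[p]] [BorelSpace ℤ_[p]]
    (μ : Measure ℤ_[p]) [μ.IsAddHaarMeasure] [IsProbabilityMeasure μ]
    (f : Polynomial ℤ_[p])
    (hsep : (f.map (PadicInt.toZMod (p := p))).Separable)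
    (hdeg : 0 < (f.map (PadicInt.toZMod (p := p))).natDegree)
    (n : ℕ) (hn : 1 ≤ n) :
    μ {x : ℤ_[p] | ‖f.eval x‖ ≤ (p : ℝ) ^ (-(n : ℤ))} =
      ((Finset.univ.filter
        fun a : ZMod p => (f.map (PadicInt.toZMod (p := p))).eval a = 0).card : ENNReal)
        * ((p : ENNReal) ^ n)⁻¹ := by
  classical
  have hp : p.Prime := Fact.out
  haveI : NeZero (p ^ n) := ⟨pow_ne_zero n hp.ne_zero⟩
  have hp1 : (1 : ℝ) < p := by exact_mod_cast hp.one_lt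
  set rad : ℝ := (p : ℝ) ^ (-(n : ℤ)) with hraddef
  have hrlt1 : rad < 1 := by
    apply zpow_lt_one_of_neg₀ hp1
    simp; omega
  -- congruence mod p in terms of norms
  have hcong : ∀ x y : ℤ_[p], ‖x - y‖ < 1 ↔ PadicInt.toZMod x = PadicInt.toZMod y := by
    intro x y
    rw [PadicInt.norm_lt_one_iff_dvd, ← Ideal.mem_span_singleton,
      ← PadicInt.maximalIdeal_eq_span_p, ← PadicInt.ker_toZMod, RingHom.mem_ker, map_sub,
      sub_eq_zero]
  have hredeval : ∀ (g : Polynomial ℤ_[p]) (x : ℤ_[p]),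
      (g.map (PadicInt.toZMod (p := p))).eval (PadicInt.toZMod x)
        = PadicInt.toZMod (g.eval x) := by
    intro g x; rw [eval_map, eval₂_at_apply]
  have hnorm1 : ∀ x : ℤ_[p], PadicInt.toZMod x ≠ 0 → ‖x‖ = 1 := by
    intro x hx
    refine le_antisymm (PadicInt.norm_le_one x) (not_lt.1 fun h => hx ?_)
    have := (hcong x 0).1 (by simpa using h)
    simpa using this
  -- derivative nonzero at roots of the reduction
  have hder : ∀ a : ZMod p, (f.map (PadicInt.toZMod (p := p))).eval a = 0 →
      (f.map (PadicInt.toZMod (p := p))).derivative.eval a ≠ 0 := by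
    intro a ha hda
    obtain ⟨u, v, huv⟩ := hsep
    have h1 := congrArg (Polynomial.eval a) huv
    simp only [eval_add, eval_mul, ha, hda, mul_zero, add_zero, eval_one] at h1
    exact one_ne_zero h1.symm
  -- Hensel lifting of each root
  have hroot : ∀ a : ZMod p, (f.map (PadicInt.toZMod (p := p))).eval a = 0 →
      ∃ z : ℤ_[p], f.eval z = 0 ∧ PadicInt.toZMod z = a ∧ ‖f.derivative.eval z‖ = 1 := by
    intro a ha
    obtain ⟨a0, ha0⟩ : ∃ x : ℤ_[p], PadicInt.toZMod x = a :=
      ⟨(a.val : ℤ_[p]), by simp [map_natCast, ZMod.natCast_val, ZMod.cast_id]⟩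
    have h1 : ‖f.derivative.eval a0‖ = 1 := by
      apply hnorm1
      rw [← hredeval f.derivative a0, ha0] at *
      rw [← derivative_map]
      exact hder a ha
    have h0 : ‖f.eval a0‖ < 1 := by
      rw [show f.eval a0 = f.eval a0 - 0 by ring, hcong]
      rw [map_zero, ← hredeval f a0, ha0]
      exact ha
    obtain ⟨z, hz0, hz1, hz2, -⟩ :=
      hensels_lemma (F := f) (a := a0) (by simp only [coe_aeval_eq_eval]; rw [h1]; simpa using h0)
    simp only [coe_aeval_eq_eval] at hz0 hz1 hz2
    refine ⟨z, hz0, ?_, by rw [hz2, h1]⟩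
    rw [h1] at hz1
    rw [(hcong z a0).1 hz1, ha0]
  choose! rt hrt0 hrt1 hrt2 using hroot
  -- the key norm identity near a lifted root
  have hkey : ∀ a : ZMod p, (f.map (PadicInt.toZMod (p := p))).eval a = 0 →
      ∀ x : ℤ_[p], ‖x - rt a‖ < 1 → ‖f.eval x‖ = ‖x - rt a‖ := by
    intro a ha x hx
    obtain ⟨k, hk⟩ := f.binomExpansion (rt a) (x - rt a)
    rw [add_sub_cancel, hrt0 a ha, zero_add] at hk
    rw [hk]
    rcases eq_or_ne (x - rt a) 0 with h | h
    · simp [h]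
    have hdpos : 0 < ‖x - rt a‖ := norm_pos_iff.2 h
    have h1 : ‖f.derivative.eval (rt a) * (x - rt a)‖ = ‖x - rt a‖ := by
      rw [norm_mul, hrt2 a ha, one_mul]
    have h2 : ‖k * (x - rt a) ^ 2‖ < ‖x - rt a‖ := by
      rw [norm_mul, norm_pow]
      calc ‖k‖ * ‖x - rt a‖ ^ 2 ≤ 1 * ‖x - rt a‖ ^ 2 := by
            gcongr; exact PadicInt.norm_le_one k
        _ = ‖x - rt a‖ * ‖x - rt a‖ := by ring
        _ < 1 * ‖x - rt a‖ := by gcongr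
        _ = ‖x - rt a‖ := one_mul _
    rw [PadicInt.norm_add_eq_max_of_ne (by rw [h1]; exact ne_of_gt h2)]
    rw [h1]
    exact max_eq_left (le_of_lt (h1 ▸ h2))
  set T : Finset (ZMod p) :=
    Finset.univ.filter fun a : ZMod p => (f.map (PadicInt.toZMod (p := p))).eval a = 0 with hT
  -- membership characterization of balls
  have hball_mem : ∀ a ∈ T, ∀ x : ℤ_[p], ‖x - rt a‖ ≤ rad → PadicInt.toZMod x = a := by
    intro a ha x hx
    have ha' : (f.map (PadicInt.toZMod (p := p))).eval a = 0 := (Finset.mem_filter.1 ha).2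
    rw [(hcong x (rt a)).1 (lt_of_le_of_lt hx hrlt1), hrt1 a ha']
  -- set decomposition
  have hset : {x : ℤ_[p] | ‖f.eval x‖ ≤ rad}
      = ⋃ a ∈ T, {x : ℤ_[p] | ‖x - rt a‖ ≤ rad} := by
    ext x
    simp only [Set.mem_setOf_eq, Set.mem_iUnion, exists_prop]
    constructor
    · intro hx
      set a : ZMod p := PadicInt.toZMod x with haa
      have ha : (f.map (PadicInt.toZMod (p := p))).eval a = 0 := by
        rw [haa, hredeval f x]
        have : ‖f.eval x - 0‖ < 1 := by simpa using lt_of_le_of_lt hx hrlt1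
        simpa using (hcong (f.eval x) 0).1 this
      have hmem : a ∈ T := by rw [hT]; simp [ha]
      have hx1 : ‖x - rt a‖ < 1 := by
        rw [hcong, hrt1 a ha, haa]
      refine ⟨a, hmem, ?_⟩
      rw [← hkey a ha x hx1]
      exact hx
    · rintro ⟨a, haT, hx⟩
      have ha : (f.map (PadicInt.toZMod (p := p))).eval a = 0 := (Finset.mem_filter.1 haT).2
      rw [hkey a ha x (lt_of_le_of_lt hx hrlt1)]
      exact hx
  -- balls are closed balls
  have hcb : ∀ c : ℤ_[p], {x : ℤ_[p] | ‖x - c‖ ≤ rad} = Metric.closedBall c rad := by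
    intro c; ext x; simp [Metric.mem_closedBall, dist_eq_norm]
  -- translation invariance
  have htrans : ∀ c : ℤ_[p], μ {x : ℤ_[p] | ‖x - c‖ ≤ rad} = μ {x : ℤ_[p] | ‖x‖ ≤ rad} := by
    intro c
    have : {x : ℤ_[p] | ‖x - c‖ ≤ rad} = (fun x => -c + x) ⁻¹' {x : ℤ_[p] | ‖x‖ ≤ rad} := by
      ext x; simp [neg_add_eq_sub]
    rw [this, measure_preimage_add]
  -- fibers of toZModPow n
  have hfiber : ∀ j : ZMod (p ^ n), (PadicInt.toZModPow n) ⁻¹' {j}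
      = {x : ℤ_[p] | ‖x - ((j.val : ℤ_[p]))‖ ≤ rad} := by
    intro j
    ext x
    simp only [Set.mem_preimage, Set.mem_singleton_iff, Set.mem_setOf_eq, hraddef]
    rw [PadicInt.norm_le_pow_iff_mem_span_pow, ← PadicInt.ker_toZModPow, RingHom.mem_ker,
      map_sub, sub_eq_zero, map_natCast]
    simp [ZMod.natCast_val, ZMod.cast_id]
  have hmeasball : ∀ c : ℤ_[p], MeasurableSet {x : ℤ_[p] | ‖x - c‖ ≤ rad} := by
    intro c; rw [hcb]; exact measurableSet_closedBall
  have hone : ∑' j : ZMod (p ^ n), μ ((PadicInt.toZModPow n) ⁻¹' {j}) = 1 := by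
    rw [← measure_iUnion]
    · have : (⋃ j : ZMod (p ^ n), (PadicInt.toZModPow n) ⁻¹' {j}) = Set.univ := by
        ext x; simp
      rw [this, measure_univ]
    · intro i j hij
      simp only [Function.onFun]
      refine Set.disjoint_left.2 fun x hxi hxj => hij ?_
      simp only [Set.mem_preimage, Set.mem_singleton_iff] at hxi hxj
      rw [← hxi, ← hxj]
    · intro j; rw [hfiber]; exact hmeasball _
  have hB : μ {x : ℤ_[p] | ‖x‖ ≤ rad} = ((p : ENNReal) ^ n)⁻¹ := by
    have heach : ∀ j : ZMod (p ^ n), μ ((PadicInt.toZModPow n) ⁻¹' {j})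
        = μ {x : ℤ_[p] | ‖x‖ ≤ rad} := fun j => by rw [hfiber, htrans]
    rw [tsum_congr heach, tsum_fintype, Finset.sum_const, Finset.card_univ,
      nsmul_eq_mul] at hone
    have hcard : (Fintype.card (ZMod (p ^ n)) : ENNReal) = (p : ENNReal) ^ n := by
      rw [ZMod.card]
      push_cast; ring
    rw [hcard] at hone
    have hpn0 : ((p : ENNReal) ^ n) ≠ 0 := by
      simp [pow_ne_zero, hp.ne_zero]
    have hpnt : ((p : ENNReal) ^ n) ≠ ⊤ := by
      exact ENNReal.pow_ne_top (ENNReal.natCast_ne_top p)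
    calc μ {x : ℤ_[p] | ‖x‖ ≤ rad}
        = ((p : ENNReal) ^ n)⁻¹ * ((p : ENNReal) ^ n * μ {x : ℤ_[p] | ‖x‖ ≤ rad}) := by
          rw [← mul_assoc, ENNReal.inv_mul_cancel hpn0 hpnt, one_mul]
      _ = ((p : ENNReal) ^ n)⁻¹ * 1 := by rw [hone]
      _ = ((p : ENNReal) ^ n)⁻¹ := mul_one _
  -- disjointness of the root balls
  have hdisj : (T : Set (ZMod p)).PairwiseDisjoint
      fun a => {x : ℤ_[p] | ‖x - rt a‖ ≤ rad} := by
    intro a ha b hb hab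
    refine Set.disjoint_left.2 fun x hxa hxb => hab ?_
    rw [← hball_mem a ha x hxa, ← hball_mem b hb x hxb]
  rw [hset, measure_biUnion_finset hdisj fun a _ => hmeasball (rt a)]
  rw [Finset.sum_congr rfl fun a _ => (htrans (rt a)).trans hB, Finset.sum_const,
    nsmul_eq_mul]
end

section
/- Let p be a prime with p ≡ 1 mod 4. Then ∫_{Z_p} |x² + 1|_p dx = (p−1)/(p+1), where dx is the Haar probability measure and |·|_p the normalized p-adic absolute value. -/
open MeasureTheory
open scoped ENNReal
set_option linter.unusedSectionVars false

variable {p : ℕ} [Fact p.Prime] [MeasurableSpace ℤ_[p]] [BorelSpace ℤ_[p]]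
  (μ : Measure ℤ_[p]) [μ.IsAddHaarMeasure] [IsProbabilityMeasure μ]

lemma ballMeas (n : ℕ) : MeasurableSet {x : ℤ_[p] | ‖x‖ ≤ (p:ℝ)^(-n:ℤ)} :=
  (isClosed_le continuous_norm continuous_const).measurableSet

lemma meas_ball (n : ℕ) :
    μ {x : ℤ_[p] | ‖x‖ ≤ (p:ℝ)^(-n:ℤ)} = ((p:ℝ≥0∞)^n)⁻¹ := by
  set B := {x : ℤ_[p] | ‖x‖ ≤ (p:ℝ)^(-n:ℤ)} with hB
  have hfib : ∀ c : ZMod (p^n),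
      {x : ℤ_[p] | PadicInt.toZModPow n x = c} = (fun x => -((c.val : ℤ_[p])) + x) ⁻¹' B := by
    intro c
    ext x
    simp only [Set.mem_setOf_eq, Set.mem_preimage, hB, Set.mem_setOf_eq,
      PadicInt.norm_le_pow_iff_mem_span_pow, ← PadicInt.ker_toZModPow, RingHom.mem_ker,
      map_add, map_neg, map_natCast]
    rw [neg_add_eq_zero]
    constructor
    · intro h; rw [h, ZMod.natCast_val, ZMod.cast_id]
    · intro h; rw [← h, ZMod.natCast_val, ZMod.cast_id]
  have hmeasfib : ∀ c : ZMod (p^n), μ {x : ℤ_[p] | PadicInt.toZModPow n x = c} = μ B := by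
    intro c
    rw [hfib c]
    exact measure_preimage_add μ _ B
  have hunion : (Set.univ : Set ℤ_[p]) = ⋃ c : ZMod (p^n), {x | PadicInt.toZModPow n x = c} := by
    ext x; simp
  have hdisj : Pairwise (Function.onFun Disjoint
      (fun c : ZMod (p^n) => {x : ℤ_[p] | PadicInt.toZModPow n x = c})) := by
    intro c d hcd
    simp only [Function.onFun, Set.disjoint_left]
    intro x hx hy
    exact hcd (hx.symm.trans hy)
  have hm : ∀ c : ZMod (p^n), MeasurableSet {x : ℤ_[p] | PadicInt.toZModPow n x = c} := by
    intro c
    rw [hfib c]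
    exact (ballMeas n).preimage (measurable_const_add _)
  have h1 : (1 : ℝ≥0∞) = ∑' c : ZMod (p^n), μ B := by
    rw [← measure_univ (μ := μ), hunion, measure_iUnion hdisj hm]
    exact tsum_congr hmeasfib
  rw [tsum_eq_sum (s := Finset.univ) (by simp), Finset.sum_const, Finset.card_univ, ZMod.card] at h1
  have hp0 : ((p:ℝ≥0∞))^n ≠ 0 := by
    simp [(Fact.out : p.Prime).ne_zero]
  have hptop : ((p:ℝ≥0∞))^n ≠ ⊤ := by
    exact ENNReal.pow_ne_top (ENNReal.natCast_ne_top p)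
  have hmul : ((p:ℝ≥0∞))^n * μ B = 1 := by
    rw [h1, nsmul_eq_mul]; push_cast; ring
  calc μ B = (((p:ℝ≥0∞))^n)⁻¹ * (((p:ℝ≥0∞))^n * μ B) := by
        rw [← mul_assoc, ENNReal.inv_mul_cancel hp0 hptop, one_mul]
    _ = (((p:ℝ≥0∞))^n)⁻¹ := by rw [hmul, mul_one]

lemma meas_sphere (n : ℕ) :
    μ {x : ℤ_[p] | ‖x‖ = (p:ℝ)^(-n:ℤ)} = ((p:ℝ≥0∞)^n)⁻¹ - ((p:ℝ≥0∞)^(n+1))⁻¹ := by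
  have hset : {x : ℤ_[p] | ‖x‖ = (p:ℝ)^(-n:ℤ)} =
      {x : ℤ_[p] | ‖x‖ ≤ (p:ℝ)^(-n:ℤ)} \ {x : ℤ_[p] | ‖x‖ ≤ (p:ℝ)^(-(n+1:ℕ):ℤ)} := by
    ext x
    have h1 : ‖x‖ ≤ (p:ℝ)^(-(n+1:ℕ):ℤ) ↔ ‖x‖ < (p:ℝ)^(-n:ℤ) := by
      rw [PadicInt.norm_le_pow_iff_norm_lt_pow_add_one]
      constructor <;> (intro h; convert h using 2; push_cast; ring)
    simp only [Set.mem_setOf_eq, Set.mem_diff, h1, not_lt]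
    constructor
    · intro h; exact ⟨le_of_eq h, ge_of_eq h⟩
    · intro ⟨h1, h2⟩; exact le_antisymm h1 h2
  have hpR : (1:ℝ) ≤ (p:ℝ) := by exact_mod_cast (Fact.out : p.Prime).one_le
  have hsub : {x : ℤ_[p] | ‖x‖ ≤ (p:ℝ)^(-(n+1:ℕ):ℤ)} ⊆ {x : ℤ_[p] | ‖x‖ ≤ (p:ℝ)^(-n:ℤ)} := by
    intro x hx
    refine le_trans hx (zpow_le_zpow_right₀ hpR (by omega))
  rw [hset, measure_diff hsub (ballMeas (n+1)).nullMeasurableSet (measure_ne_top μ _),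
    meas_ball μ n, meas_ball μ (n+1)]

lemma meas_zero_set : μ ({0} : Set ℤ_[p]) = 0 := by
  have h : ∀ n : ℕ, μ ({0} : Set ℤ_[p]) ≤ ((p:ℝ≥0∞)⁻¹) ^ n := by
    intro n
    rw [← ENNReal.inv_pow, ← meas_ball μ n]
    apply measure_mono
    intro x hx
    simp only [Set.mem_singleton_iff] at hx
    simp [hx]
  have hp1 : ((p:ℝ≥0∞))⁻¹ < 1 := by
    rw [ENNReal.inv_lt_one]
    exact_mod_cast Nat.one_lt_cast.mpr (Fact.out : p.Prime).one_lt
  have ht := ENNReal.tendsto_pow_atTop_nhds_zero_of_lt_one hp1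
  exact nonpos_iff_eq_zero.mp (ge_of_tendsto' ht h)

lemma norm_eq_one_of_toZMod_ne (z : ℤ_[p]) (h : PadicInt.toZMod z ≠ 0) : ‖z‖ = 1 := by
  refine le_antisymm (PadicInt.norm_le_one _) (not_lt.mp ?_)
  intro hlt
  rw [PadicInt.norm_lt_one_iff_dvd, ← Ideal.mem_span_singleton,
    ← PadicInt.maximalIdeal_eq_span_p, ← PadicInt.ker_toZMod, RingHom.mem_ker] at hlt
  exact h hlt

lemma exists_sqrt_neg_one (hp : p % 4 = 1) : ∃ a : ℤ_[p], a^2 = -1 := by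
  have hp3 : p % 4 ≠ 3 := by omega
  obtain ⟨r, hr⟩ := ZMod.exists_sq_eq_neg_one_iff.mpr hp3
  have hpp : p.Prime := Fact.out
  have hpodd : p ≠ 2 := by omega
  set a₀ : ℤ_[p] := ((r.val : ℕ) : ℤ_[p]) with ha₀
  have hr0 : r ≠ 0 := by
    intro h; rw [h, mul_zero] at hr
    exact (by simp : (-1 : ZMod p) ≠ 0) hr
  have htoZMod : PadicInt.toZMod a₀ = r := by
    rw [ha₀, map_natCast, ZMod.natCast_val, ZMod.cast_id]
  have hnorm_a₀ : ‖a₀‖ = 1 := norm_eq_one_of_toZMod_ne a₀ (htoZMod ▸ hr0)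
  have hnorm2 : ‖(2 : ℤ_[p])‖ = 1 := by
    apply norm_eq_one_of_toZMod_ne
    have : ((2:ℕ) : ZMod p) ≠ 0 := by
      rw [Ne, ZMod.natCast_eq_zero_iff]
      exact fun hd => hpodd ((Nat.prime_dvd_prime_iff_eq hpp Nat.prime_two).mp hd)
    intro h2
    apply this
    rw [← h2, ← map_natCast (PadicInt.toZMod (p := p))]
    norm_num
  -- Hensel's lemma for F = X^2 + 1
  set F : Polynomial ℤ_[p] := Polynomial.X^2 + Polynomial.C 1 with hF
  have hFeval : ∀ z : ℤ_[p], F.eval z = z^2 + 1 := by intro z; simp [hF]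
  have hFderiv : ∀ z : ℤ_[p], F.derivative.eval z = 2*z := by
    intro z; simp [hF]; norm_num
  have hdvd : (p : ℤ_[p]) ∣ a₀^2 + 1 := by
    rw [← Ideal.mem_span_singleton, ← PadicInt.maximalIdeal_eq_span_p,
      ← PadicInt.ker_toZMod, RingHom.mem_ker, map_add, map_pow, map_one, htoZMod]
    rw [sq, ← hr]
    ring
  have hnorm : ‖F.eval a₀‖ < ‖F.derivative.eval a₀‖^2 := by
    rw [hFeval, hFderiv, norm_mul, hnorm2, hnorm_a₀]
    norm_num
    exact (PadicInt.norm_lt_one_iff_dvd _).mpr hdvd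
  obtain ⟨z, hz, -⟩ := hensels_lemma hnorm
  rw [Polynomial.coe_aeval_eq_eval, hFeval] at hz
  exact ⟨z, by linear_combination hz⟩

section Main
variable {p : ℕ} [Fact p.Prime] [MeasurableSpace ℤ_[p]] [BorelSpace ℤ_[p]]
  (μ : Measure ℤ_[p]) [μ.IsAddHaarMeasure] [IsProbabilityMeasure μ]

/-- The key integral `J = ∫_{pℤ_p} ‖y‖ dμ = 1/(p(p+1))`. -/
lemma integral_norm_ball :
    ∫ y, Set.indicator {y : ℤ_[p] | ‖y‖ < 1} (fun y => ‖y‖) y ∂μ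
      = 1 / ((p:ℝ) * ((p:ℝ) + 1)) := by
  have hpp : p.Prime := Fact.out
  have hpR : (1:ℝ) < (p:ℝ) := by exact_mod_cast hpp.one_lt
  have hpR0 : (0:ℝ) < (p:ℝ) := by positivity
  set D : Set ℤ_[p] := {y : ℤ_[p] | ‖y‖ < 1} with hD
  have hDmeas : MeasurableSet D := (isOpen_lt continuous_norm continuous_const).measurableSet
  set s : ℕ → Set ℤ_[p] := fun k => {y : ℤ_[p] | ‖y‖ = (p:ℝ)^(-(k+1:ℕ):ℤ)} with hs
  have hsmeas : ∀ k, MeasurableSet (s k) :=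
    fun k => (isClosed_eq continuous_norm continuous_const).measurableSet
  have hsub : ∀ k, s k ⊆ D := by
    intro k y hy
    simp only [hs, Set.mem_setOf_eq] at hy
    simp only [hD, Set.mem_setOf_eq, hy]
    apply zpow_lt_one_of_neg₀ hpR
    omega
  have hDeq : D = {(0:ℤ_[p])} ∪ ⋃ k, s k := by
    ext y
    constructor
    · intro hy
      rcases eq_or_ne y 0 with h0 | h0
      · exact Or.inl h0
      · refine Or.inr (Set.mem_iUnion.mpr ?_)
        have hval := PadicInt.norm_eq_zpow_neg_valuation h0
        have hval0 := Nat.zero_le y.valuation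
        have hpos : 0 < y.valuation := by
          by_contra hneg
          push_neg at hneg
          have h00 : y.valuation = 0 := le_antisymm hneg hval0
          simp only [hD, Set.mem_setOf_eq, hval, h00] at hy
          norm_num at hy
        refine ⟨y.valuation - 1, ?_⟩
        simp only [hs, Set.mem_setOf_eq, hval]
        congr 1
        omega
    · intro hy
      rcases hy with h0 | hy
      · simp only [Set.mem_singleton_iff] at h0
        simp [hD, h0, zero_lt_one]
      · obtain ⟨k, hk⟩ := Set.mem_iUnion.mp hy
        exact hsub k hk
  have hDae : D =ᵐ[μ] ⋃ k, s k := by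
    have h1 : μ (D \ ⋃ k, s k) = 0 := by
      refine measure_mono_null (fun y hy => ?_) (meas_zero_set μ)
      rcases hDeq ▸ hy.1 with h | h
      · exact h
      · exact absurd h hy.2
    have h2 : μ ((⋃ k, s k) \ D) = 0 := by
      refine measure_mono_null (fun y hy => ?_) (measure_empty (μ := μ))
      exact absurd (Set.iUnion_subset hsub hy.1) hy.2
    exact (MeasureTheory.ae_eq_set.mpr ⟨h1, h2⟩)
  have hdisj : Pairwise (Function.onFun Disjoint s) := by
    intro i j hij
    simp only [Function.onFun, Set.disjoint_left, hs, Set.mem_setOf_eq]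
    intro y hyi hyj
    apply hij
    have heq : (p:ℝ)^(-(i+1:ℕ):ℤ) = (p:ℝ)^(-(j+1:ℕ):ℤ) := hyi.symm.trans hyj
    have := zpow_right_injective₀ hpR0 (ne_of_gt hpR) heq
    omega
  have hnormint : Integrable (fun y : ℤ_[p] => ‖y‖) μ := by
    rw [← integrableOn_univ]
    exact continuous_norm.continuousOn.integrableOn_compact isCompact_univ
  rw [integral_indicator hDmeas, setIntegral_congr_set hDae,
    integral_iUnion hsmeas hdisj hnormint.integrableOn]
  set q : ℝ := (p:ℝ)⁻¹ with hq
  have hq0 : 0 < q := by positivity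
  have hq1 : q < 1 := by
    rw [hq]
    exact inv_lt_one_of_one_lt₀ hpR
  have hterm : ∀ k : ℕ, ∫ y in s k, ‖y‖ ∂μ = (q^2)^k * (q^2 - q^3) := by
    intro k
    rw [setIntegral_congr_fun (hsmeas k) (fun y hy => hy), setIntegral_const, measureReal_def,
      meas_sphere μ (k+1)]
    have hple : ∀ m n : ℕ, m ≤ n → ((p:ℝ≥0∞))^m ≤ ((p:ℝ≥0∞))^n := by
      intro m n hmn
      apply pow_le_pow_right₀ _ hmn
      exact_mod_cast Nat.one_le_cast.mpr hpp.one_le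
    have hle : ((p:ℝ≥0∞)^(k+1+1))⁻¹ ≤ ((p:ℝ≥0∞)^(k+1))⁻¹ :=
      ENNReal.inv_le_inv.mpr (hple _ _ (by omega))
    have hnt : ((p:ℝ≥0∞)^(k+1))⁻¹ ≠ ⊤ := by
      rw [ENNReal.inv_ne_top]
      apply pow_ne_zero
      exact_mod_cast hpp.ne_zero
    rw [ENNReal.toReal_sub_of_le hle hnt]
    have htr : ∀ m : ℕ, (((p:ℝ≥0∞))^m)⁻¹.toReal = q^m := by
      intro m
      rw [ENNReal.toReal_inv, ENNReal.toReal_pow, hq, inv_pow]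
      norm_num
    rw [htr, htr, smul_eq_mul]
    have hzp : (p:ℝ)^(-(k+1:ℕ):ℤ) = q^(k+1) := by
      rw [zpow_neg, zpow_natCast, hq, inv_pow]
    rw [hzp]
    ring
  simp_rw [hterm]
  rw [tsum_mul_right, tsum_geometric_of_lt_one (by positivity) (by nlinarith)]
  have h1q : (1:ℝ) - q^2 ≠ 0 := by nlinarith
  have hp0 : (p:ℝ) ≠ 0 := ne_of_gt hpR0
  have hp1 : (p:ℝ) + 1 ≠ 0 := by positivity
  have hkey : q^2 - q^3 = (1 - q^2) * (1/((p:ℝ)*((p:ℝ)+1))) := by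
    rw [hq]
    field_simp
    ring
  rw [hkey, ← mul_assoc, inv_mul_cancel₀ h1q, one_mul]

end Main

/-- For a prime `p ≡ 1 (mod 4)`, `∫_{ℤ_p} |x² + 1|_p dx = (p−1)/(p+1)` with respect
to the Haar probability measure on `ℤ_p`. -/
theorem stmt15 (p : ℕ) [Fact p.Prime] (hp : p % 4 = 1)
    [MeasurableSpace ℤ_[p]] [BorelSpace ℤ_[p]]
    (μ : Measure ℤ_[p]) [μ.IsAddHaarMeasure] [IsProbabilityMeasure μ] :
    ∫ x, ‖x ^ 2 + 1‖ ∂μ = ((p : ℝ) - 1) / ((p : ℝ) + 1) := by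
  obtain ⟨a, ha⟩ := exists_sqrt_neg_one (p := p) hp
  have hpp : p.Prime := Fact.out
  have hpodd : p ≠ 2 := by omega
  have hpR : (1:ℝ) < (p:ℝ) := by exact_mod_cast hpp.one_lt
  have hnorma : ‖a‖ = 1 := by
    have h2 : ‖a‖ * ‖a‖ = 1 := by
      rw [← norm_mul, ← sq, ha, norm_neg, norm_one]
    have h3 : (‖a‖ - 1) * (‖a‖ + 1) = 0 := by nlinarith
    rcases mul_eq_zero.mp h3 with h | h
    · linarith
    · nlinarith [norm_nonneg a]
  have hnorm2 : ‖(2:ℤ_[p])‖ = 1 := by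
    apply norm_eq_one_of_toZMod_ne
    have h2 : ((2:ℕ) : ZMod p) ≠ 0 := by
      rw [Ne, ZMod.natCast_eq_zero_iff]
      exact fun hd => hpodd ((Nat.prime_dvd_prime_iff_eq hpp Nat.prime_two).mp hd)
    intro hcon
    apply h2
    rw [← hcon, ← map_natCast (PadicInt.toZMod (p := p))]
    norm_num
  have hnorm2a : ‖2*a‖ = 1 := by rw [norm_mul, hnorm2, hnorma, mul_one]
  set A := {x : ℤ_[p] | ‖x - a‖ < 1} with hA
  set B := {x : ℤ_[p] | ‖x + a‖ < 1} with hB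
  have hAmeas : MeasurableSet A :=
    (isOpen_lt ((continuous_id.sub continuous_const).norm) continuous_const).measurableSet
  have hBmeas : MeasurableSet B :=
    (isOpen_lt ((continuous_id.add continuous_const).norm) continuous_const).measurableSet
  have hfact : ∀ x : ℤ_[p], ‖x^2+1‖ = ‖x - a‖ * ‖x + a‖ := by
    intro x
    rw [← norm_mul]
    congr 1
    linear_combination ha
  have hA1 : ∀ x ∈ A, ‖x + a‖ = 1 := by
    intro x hx
    simp only [hA, Set.mem_setOf_eq] at hx
    have hxa : x + a = (x - a) + 2*a := by ring
    have hne : ‖x - a‖ ≠ ‖2*a‖ := by rw [hnorm2a]; exact ne_of_lt hx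
    rw [hxa, PadicInt.norm_add_eq_max_of_ne hne, hnorm2a]
    exact max_eq_right (le_of_lt hx)
  have hB1 : ∀ x ∈ B, ‖x - a‖ = 1 := by
    intro x hx
    simp only [hB, Set.mem_setOf_eq] at hx
    have hxa : x - a = (x + a) + (-(2*a)) := by ring
    have hne : ‖x + a‖ ≠ ‖-(2*a)‖ := by rw [norm_neg, hnorm2a]; exact ne_of_lt hx
    rw [hxa, PadicInt.norm_add_eq_max_of_ne hne, norm_neg, hnorm2a]
    exact max_eq_right (le_of_lt hx)
  have hABdisj : Disjoint A B := by
    rw [Set.disjoint_left]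
    intro x hxA hxB
    simp only [hB, Set.mem_setOf_eq] at hxB
    rw [hA1 x hxA] at hxB
    exact lt_irrefl 1 hxB
  set C := (A ∪ B)ᶜ with hC
  have hCmeas : MeasurableSet C := (hAmeas.union hBmeas).compl
  have hdecomp : (fun x : ℤ_[p] => ‖x^2+1‖) =
      fun x => (A.indicator (fun x => ‖x - a‖) x + B.indicator (fun x => ‖x + a‖) x)
        + C.indicator (fun _ => (1:ℝ)) x := by
    funext x
    by_cases hxA : x ∈ A
    · have hxB : x ∉ B := Set.disjoint_left.mp hABdisj hxA
      have hxC : x ∉ C := by simp [hC, hxA]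
      rw [Set.indicator_of_mem hxA, Set.indicator_of_notMem hxB, Set.indicator_of_notMem hxC,
        add_zero, add_zero, hfact, hA1 x hxA, mul_one]
    · by_cases hxB : x ∈ B
      · have hxC : x ∉ C := by simp [hC, hxB]
        rw [Set.indicator_of_notMem hxA, Set.indicator_of_mem hxB, Set.indicator_of_notMem hxC,
          zero_add, add_zero, hfact, hB1 x hxB, one_mul]
      · have hxC : x ∈ C := by simp [hC, hxA, hxB]
        simp only [hA, Set.mem_setOf_eq, not_lt] at hxA
        simp only [hB, Set.mem_setOf_eq, not_lt] at hxB
        have h1 : ‖x - a‖ = 1 := le_antisymm (PadicInt.norm_le_one _) hxA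
        have h2 : ‖x + a‖ = 1 := le_antisymm (PadicInt.norm_le_one _) hxB
        rw [Set.indicator_of_notMem (by simp [hA, Set.mem_setOf_eq]; linarith),
          Set.indicator_of_notMem (by simp [hB, Set.mem_setOf_eq]; linarith),
          Set.indicator_of_mem hxC, zero_add, zero_add, hfact, h1, h2, mul_one]
  have hint1 : Integrable (fun x : ℤ_[p] => ‖x - a‖) μ := by
    rw [← integrableOn_univ]
    exact ((continuous_id.sub continuous_const).norm).continuousOn.integrableOn_compact
      isCompact_univ
  have hint2 : Integrable (fun x : ℤ_[p] => ‖x + a‖) μ := by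
    rw [← integrableOn_univ]
    exact ((continuous_id.add continuous_const).norm).continuousOn.integrableOn_compact
      isCompact_univ
  have hi1 := hint1.indicator hAmeas
  have hi2 := hint2.indicator hBmeas
  have hi3 := (integrable_const (μ := μ) (1:ℝ)).indicator hCmeas
  have hi12 : Integrable (fun x => A.indicator (fun x => ‖x - a‖) x
      + B.indicator (fun x => ‖x + a‖) x) μ := hi1.add hi2
  rw [hdecomp, integral_add hi12 hi3, integral_add hi1 hi2]
  -- measures of the two balls
  have hlt_iff : ∀ z : ℤ_[p], ‖z‖ < 1 ↔ ‖z‖ ≤ (p:ℝ)^(-(1:ℕ):ℤ) := by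
    intro z
    have := PadicInt.norm_lt_pow_iff_norm_le_pow_sub_one z 0
    simpa using this
  have hmuA : μ A = (p:ℝ≥0∞)⁻¹ := by
    have hAeq : A = (fun x => -a + x) ⁻¹' {y : ℤ_[p] | ‖y‖ ≤ (p:ℝ)^(-(1:ℕ):ℤ)} := by
      ext x
      simp only [hA, Set.mem_setOf_eq, Set.mem_preimage, neg_add_eq_sub]
      exact hlt_iff (x - a)
    rw [hAeq, measure_preimage_add, meas_ball μ 1, pow_one]
  have hmuB : μ B = (p:ℝ≥0∞)⁻¹ := by
    have hBeq : B = (fun x => a + x) ⁻¹' {y : ℤ_[p] | ‖y‖ ≤ (p:ℝ)^(-(1:ℕ):ℤ)} := by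
      ext x
      simp only [hB, Set.mem_setOf_eq, Set.mem_preimage]
      rw [add_comm a x]
      exact hlt_iff (x + a)
    rw [hBeq, measure_preimage_add, meas_ball μ 1, pow_one]
  -- the three integrals
  have hIA : ∫ x, A.indicator (fun x => ‖x - a‖) x ∂μ = 1/((p:ℝ)*((p:ℝ)+1)) := by
    have heq : ∀ x : ℤ_[p], A.indicator (fun x => ‖x - a‖) x
        = Set.indicator {y : ℤ_[p] | ‖y‖ < 1} (fun y => ‖y‖) (x - a) := by
      intro x
      by_cases hxA : x ∈ A
      · have hx' : x - a ∈ {y : ℤ_[p] | ‖y‖ < 1} := hxA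
        rw [Set.indicator_of_mem hxA, Set.indicator_of_mem hx']
      · have hx' : x - a ∉ {y : ℤ_[p] | ‖y‖ < 1} := hxA
        rw [Set.indicator_of_notMem hxA, Set.indicator_of_notMem hx']
    simp_rw [heq]
    rw [integral_sub_right_eq_self (Set.indicator {y : ℤ_[p] | ‖y‖ < 1} (fun y => ‖y‖)) a]
    exact integral_norm_ball μ
  have hIB : ∫ x, B.indicator (fun x => ‖x + a‖) x ∂μ = 1/((p:ℝ)*((p:ℝ)+1)) := by
    have heq : ∀ x : ℤ_[p], B.indicator (fun x => ‖x + a‖) x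
        = Set.indicator {y : ℤ_[p] | ‖y‖ < 1} (fun y => ‖y‖) (x + a) := by
      intro x
      by_cases hxB : x ∈ B
      · have hx' : x + a ∈ {y : ℤ_[p] | ‖y‖ < 1} := hxB
        rw [Set.indicator_of_mem hxB, Set.indicator_of_mem hx']
      · have hx' : x + a ∉ {y : ℤ_[p] | ‖y‖ < 1} := hxB
        rw [Set.indicator_of_notMem hxB, Set.indicator_of_notMem hx']
    simp_rw [heq]
    rw [integral_add_right_eq_self (Set.indicator {y : ℤ_[p] | ‖y‖ < 1} (fun y => ‖y‖)) a]
    exact integral_norm_ball μ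
  have hIC : ∫ x, C.indicator (fun _ => (1:ℝ)) x ∂μ = 1 - 2/(p:ℝ) := by
    rw [integral_indicator hCmeas, setIntegral_const, smul_eq_mul, mul_one]
    have hle2 : (2:ℝ≥0∞) ≤ (p:ℝ≥0∞) := by exact_mod_cast Nat.ofNat_le_cast.mpr hpp.two_le
    have hle : (p:ℝ≥0∞)⁻¹ + (p:ℝ≥0∞)⁻¹ ≤ 1 := by
      calc (p:ℝ≥0∞)⁻¹ + (p:ℝ≥0∞)⁻¹ ≤ (2:ℝ≥0∞)⁻¹ + (2:ℝ≥0∞)⁻¹ :=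
            add_le_add (ENNReal.inv_le_inv.mpr hle2) (ENNReal.inv_le_inv.mpr hle2)
        _ = 1 := ENNReal.inv_two_add_inv_two
    have hfin : ((p:ℝ≥0∞))⁻¹ ≠ ⊤ :=
      ENNReal.inv_ne_top.mpr (by exact_mod_cast hpp.ne_zero)
    rw [hC, measureReal_def, measure_compl (hAmeas.union hBmeas) (measure_ne_top μ _), measure_univ,
      measure_union hABdisj hBmeas, hmuA, hmuB,
      ENNReal.toReal_sub_of_le hle ENNReal.one_ne_top, ENNReal.toReal_one,
      ENNReal.toReal_add hfin hfin, ENNReal.toReal_inv, ENNReal.toReal_natCast]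
    ring
  rw [hIA, hIB, hIC]
  have hp0 : (p:ℝ) ≠ 0 := by positivity
  have hp1 : (p:ℝ) + 1 ≠ 0 := by positivity
  field_simp
  ring
end

section
/- For any prime p, ∫_{Z_p²} |(x₁ + x₂)(x₁ − (p−1)x₂)|_p dx₁ dx₂ = (p² + p − 1)/(p+1)², with respect to the Haar probability measure on Z_p². -/
open MeasureTheory Set ENNReal NNReal
set_option linter.unusedSectionVars false

section aux
variable {p : ℕ} [Fact p.Prime] [MeasurableSpace ℤ_[p]] [BorelSpace ℤ_[p]]
  (μ : Measure ℤ_[p]) [μ.IsAddHaarMeasure] [IsProbabilityMeasure μ]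

/-- the set `pℤ_p`. -/
def padS (p : ℕ) [Fact p.Prime] : Set ℤ_[p] := {x | ‖x‖ < 1}

lemma padS_open : IsOpen (padS p) := isOpen_lt continuous_norm continuous_const

lemma padS_meas : MeasurableSet (padS p) := padS_open.measurableSet

lemma padS_eq_range : padS p = Set.range (fun y : ℤ_[p] => (p : ℤ_[p]) * y) := by
  ext x
  simp only [padS, mem_setOf_eq, PadicInt.norm_lt_one_iff_dvd, Set.mem_range, dvd_def]
  exact ⟨fun ⟨c, hc⟩ => ⟨c, hc.symm⟩, fun ⟨c, hc⟩ => ⟨c, hc.symm⟩⟩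

lemma pad_emb : MeasurableEmbedding (fun y : ℤ_[p] => (p : ℤ_[p]) * y) := by
  have hp : ((p : ℤ_[p])) ≠ 0 :=
    Nat.cast_ne_zero.mpr (Fact.out : p.Prime).ne_zero
  have hc : Continuous (fun y : ℤ_[p] => (p : ℤ_[p]) * y) := continuous_const.mul continuous_id
  have hinj : Function.Injective (fun y : ℤ_[p] => (p : ℤ_[p]) * y) :=
    fun a b h => mul_left_cancel₀ hp h
  exact (hc.isClosedEmbedding hinj).measurableEmbedding

lemma padS_measure : μ (padS p) = (p : ℝ≥0∞)⁻¹ := by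
  classical
  set T : ZMod p → Set ℤ_[p] := fun c => (fun x => -(ZMod.cast c : ℤ_[p]) + x) ⁻¹' (padS p) with hT
  have hfiber : ∀ (c : ZMod p) (x : ℤ_[p]), x ∈ T c ↔ PadicInt.toZMod x = c := by
    intro c x
    have h1 : (-(ZMod.cast c : ℤ_[p]) + x) = x - (ZMod.cast c : ℤ_[p]) := by ring
    simp only [hT, mem_preimage, padS, mem_setOf_eq, h1, PadicInt.norm_lt_one_iff_dvd]
    rw [← Ideal.mem_span_singleton, ← PadicInt.maximalIdeal_eq_span_p,
      ← PadicInt.ker_toZMod, RingHom.mem_ker, map_sub, sub_eq_zero]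
    constructor
    · intro h; rw [← ZMod.ringHom_map_cast PadicInt.toZMod c]; exact h
    · intro h; rw [h, ZMod.ringHom_map_cast]
  have hmeas : ∀ c, MeasurableSet (T c) :=
    fun c => (padS_open.preimage (continuous_const.add continuous_id)).measurableSet
  have hdisj : Pairwise (Function.onFun Disjoint T) := by
    intro c d hcd
    refine Set.disjoint_left.mpr fun x hxc hxd => hcd ?_
    rw [← (hfiber c x).mp hxc, ← (hfiber d x).mp hxd]
  have hcover : (⋃ c, T c) = Set.univ := by
    ext x
    simp only [mem_iUnion, mem_univ, iff_true]
    exact ⟨PadicInt.toZMod x, (hfiber _ x).mpr rfl⟩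
  have hTμ : ∀ c, μ (T c) = μ (padS p) := fun c =>
    measure_preimage_add μ _ _
  have hsum : ∑' c : ZMod p, μ (T c) = 1 := by
    rw [← measure_iUnion hdisj hmeas, hcover, measure_univ]
  have hcard : (p : ℝ≥0∞) * μ (padS p) = 1 := by
    have : ∑' c : ZMod p, μ (T c) = (Fintype.card (ZMod p) : ℝ≥0∞) * μ (padS p) := by
      rw [tsum_fintype]
      simp [hTμ, Finset.sum_const, nsmul_eq_mul]
    rw [this, ZMod.card] at hsum
    exact hsum
  have hp0 : (p : ℝ≥0∞) ≠ 0 := Nat.cast_ne_zero.mpr (Fact.out : p.Prime).ne_zero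
  have hptop : (p : ℝ≥0∞) ≠ ⊤ := ENNReal.natCast_ne_top p
  calc μ (padS p) = (p : ℝ≥0∞)⁻¹ * ((p : ℝ≥0∞) * μ (padS p)) := by
        rw [← mul_assoc, ENNReal.inv_mul_cancel hp0 hptop, one_mul]
    _ = (p : ℝ≥0∞)⁻¹ := by rw [hcard, mul_one]

end aux

section aux2
variable {p : ℕ} [Fact p.Prime] [MeasurableSpace ℤ_[p]] [BorelSpace ℤ_[p]]
  (μ : Measure ℤ_[p]) [μ.IsAddHaarMeasure] [IsProbabilityMeasure μ]

lemma pad_comap_eq : Measure.comap (fun y : ℤ_[p] => (p : ℤ_[p]) * y) μ = (p : ℝ≥0∞)⁻¹ • μ := by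
  set e : ℤ_[p] → ℤ_[p] := fun y => (p : ℤ_[p]) * y with he_def
  have he : MeasurableEmbedding e := pad_emb
  set ν : Measure ℤ_[p] := Measure.comap e μ with hν_def
  have hν_apply : ∀ s : Set ℤ_[p], ν s = μ (e '' s) := fun s => he.comap_apply μ s
  have hinv : ν.IsAddLeftInvariant := by
    constructor
    intro t
    ext s hs
    rw [Measure.map_apply (measurable_const_add t) hs]
    rw [hν_apply, hν_apply]
    have himg : e '' ((fun x => t + x) ⁻¹' s) = (fun x => (p : ℤ_[p]) * t + x) ⁻¹' (e '' s) := by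
      ext z
      constructor
      · rintro ⟨w, hw, rfl⟩
        exact ⟨t + w, hw, by simp [he_def]; ring⟩
      · rintro ⟨w, hw, hwz⟩
        refine ⟨w - t, by simpa using hw, ?_⟩
        simp only [he_def] at hwz ⊢
        rw [mul_sub]
        rw [hwz]
        ring
    rw [himg, measure_preimage_add]
  have hfin : IsFiniteMeasure ν := by
    constructor
    rw [hν_apply, Set.image_univ, ← padS_eq_range, padS_measure]
    exact lt_of_le_of_lt (ENNReal.inv_le_one.mpr (by exact_mod_cast Nat.one_le_iff_ne_zero.mpr (Fact.out : p.Prime).ne_zero)) ENNReal.one_lt_top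
  have h1 : ν = Measure.addHaarScalarFactor ν μ • μ := Measure.isAddLeftInvariant_eq_smul ν μ
  have h2 : ν Set.univ = (p : ℝ≥0∞)⁻¹ := by
    rw [hν_apply, Set.image_univ, ← padS_eq_range, padS_measure]
  rw [h1] at h2
  have h3 : (Measure.addHaarScalarFactor ν μ : ℝ≥0∞) = (p : ℝ≥0∞)⁻¹ := by
    simpa only [Measure.smul_apply, measure_univ, ENNReal.smul_def, smul_eq_mul, mul_one] using h2
  rw [h1, ← h3, ENNReal.smul_def]

end aux2

section aux3
variable {p : ℕ} [Fact p.Prime] [MeasurableSpace ℤ_[p]] [BorelSpace ℤ_[p]]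
  (μ : Measure ℤ_[p]) [μ.IsAddHaarMeasure] [IsProbabilityMeasure μ]

/-- scaling of set integrals over `pℤ_p`. -/
lemma pad_setIntegral (f : ℤ_[p] → ℝ) :
    ∫ x in padS p, f x ∂μ = (p : ℝ)⁻¹ * ∫ y, f ((p : ℤ_[p]) * y) ∂μ := by
  have he : MeasurableEmbedding (fun y : ℤ_[p] => (p : ℤ_[p]) * y) := pad_emb
  rw [show (padS p) = Set.range (fun y : ℤ_[p] => (p : ℤ_[p]) * y) from padS_eq_range,
    ← he.map_comap μ, he.integral_map, pad_comap_eq μ, integral_smul_measure]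
  simp [ENNReal.toReal_inv]

lemma pad_norm_compl {x : ℤ_[p]} (hx : x ∉ padS p) (b : ℤ_[p]) (hb : ‖b‖ < 1) :
    ‖x - b‖ = 1 := by
  have hx1 : ‖x‖ = 1 := le_antisymm (PadicInt.norm_le_one x) (not_lt.mp hx)
  refine le_antisymm ?_ ?_
  · calc ‖x - b‖ ≤ max ‖x‖ ‖-b‖ := by rw [sub_eq_add_neg]; exact PadicInt.nonarchimedean x (-b)
      _ ≤ 1 := max_le (le_of_eq hx1) (by rw [norm_neg]; exact hb.le)
  · by_contra h
    push_neg at h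
    have : ‖x‖ < 1 := by
      calc ‖x‖ = ‖(x - b) + b‖ := by rw [sub_add_cancel]
        _ ≤ max ‖x - b‖ ‖b‖ := PadicInt.nonarchimedean _ _
        _ < 1 := max_lt h hb
    rw [hx1] at this; exact lt_irrefl _ this

lemma pad_integrable {X : Type*} [TopologicalSpace X] [CompactSpace X] [MeasurableSpace X]
    [OpensMeasurableSpace X] (m : Measure X) [IsFiniteMeasure m] {f : X → ℝ}
    (hf : Continuous f) : Integrable f m :=
  hf.integrable_of_hasCompactSupport (HasCompactSupport.of_compactSpace f)

lemma pad_compl_measure : (μ (padS p)ᶜ).toReal = 1 - (p : ℝ)⁻¹ := by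
  have hle : (p : ℝ≥0∞)⁻¹ ≤ 1 := by
    rw [ENNReal.inv_le_one]
    exact_mod_cast Nat.one_le_iff_ne_zero.mpr (Fact.out : p.Prime).ne_zero
  have h : μ (padS p)ᶜ = 1 - (p : ℝ≥0∞)⁻¹ := by
    rw [measure_compl padS_meas (measure_ne_top μ _), measure_univ, padS_measure]
  rw [h, ENNReal.toReal_sub_of_le hle ENNReal.one_ne_top, ENNReal.toReal_one,
    ENNReal.toReal_inv]
  simp

lemma pad_normA : ∫ x, ‖x‖ ∂μ = (p : ℝ) / ((p : ℝ) + 1) := by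
  have hp1 : (1 : ℝ) < p := by exact_mod_cast (Fact.out : p.Prime).one_lt
  have hp0 : (0 : ℝ) < p := lt_trans one_pos hp1
  set A := ∫ x, ‖x‖ ∂μ with hA
  have hint : Integrable (fun x : ℤ_[p] => ‖x‖) μ := pad_integrable μ continuous_norm
  have hsplit : (∫ x in padS p, ‖x‖ ∂μ) + ∫ x in (padS p)ᶜ, ‖x‖ ∂μ = A :=
    integral_add_compl padS_meas hint
  have h1 : ∫ x in (padS p)ᶜ, ‖x‖ ∂μ = 1 - (p : ℝ)⁻¹ := by
    rw [setIntegral_congr_fun padS_meas.compl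
      (fun x hx => le_antisymm (PadicInt.norm_le_one x) (not_lt.mp hx) : Set.EqOn _ (fun _ => (1:ℝ)) _)]
    rw [setIntegral_const, measureReal_def, pad_compl_measure, smul_eq_mul, mul_one]
  have h2 : ∫ x in padS p, ‖x‖ ∂μ = (p : ℝ)⁻¹ * ((p : ℝ)⁻¹ * A) := by
    rw [pad_setIntegral μ]
    congr 1
    calc ∫ y, ‖(p : ℤ_[p]) * y‖ ∂μ = ∫ y, (p : ℝ)⁻¹ * ‖y‖ ∂μ := by
          simp [norm_mul, PadicInt.norm_p]
      _ = (p : ℝ)⁻¹ * A := integral_const_mul _ _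
  rw [h1, h2] at hsplit
  have hq : (p : ℝ) + 1 ≠ 0 := by positivity
  field_simp at hsplit
  have hfac : (A * ((p : ℝ) + 1) - p) * ((p : ℝ) * ((p : ℝ) - 1)) = 0 := by
    linear_combination (-(p : ℝ)) * hsplit
  have h5 : A * ((p : ℝ) + 1) - p = 0 := by
    rcases mul_eq_zero.mp hfac with h | h
    · exact h
    · nlinarith
  rw [eq_div_iff hq]
  linarith

end aux3

/-- For any prime `p`,
`∫_{ℤ_p²} |(x₁+x₂)(x₁−(p−1)x₂)|_p dx₁dx₂ = (p²+p−1)/(p+1)²`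
with respect to the product Haar probability measure on `ℤ_p²`. -/
theorem stmt18 (p : ℕ) [Fact p.Prime]
    [MeasurableSpace ℤ_[p]] [BorelSpace ℤ_[p]]
    (μ : Measure ℤ_[p]) [μ.IsAddHaarMeasure] [IsProbabilityMeasure μ] :
    ∫ x : ℤ_[p] × ℤ_[p], ‖(x.1 + x.2) * (x.1 - ((p : ℤ_[p]) - 1) * x.2)‖ ∂(μ.prod μ) =
      ((p : ℝ) ^ 2 + (p : ℝ) - 1) / ((p : ℝ) + 1) ^ 2 := by
  have hp1 : (1 : ℝ) < p := by exact_mod_cast (Fact.out : p.Prime).one_lt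
  have hp0 : (0 : ℝ) < p := lt_trans one_pos hp1
  set q : ℝ := (p : ℝ) with hq_def
  have hA := pad_normA μ
  set A : ℝ := ∫ x, ‖x‖ ∂μ with hA_def
  -- rewrite the integrand
  have hrw : ∀ x : ℤ_[p] × ℤ_[p],
      ‖(x.1 + x.2) * (x.1 - ((p : ℤ_[p]) - 1) * x.2)‖
        = ‖(x.1 + x.2) * ((x.1 + x.2) - (p : ℤ_[p]) * x.2)‖ := by
    intro x; congr 1; ring
  simp only [hrw]
  -- integrability of the main function
  have hcontF : Continuous fun x : ℤ_[p] × ℤ_[p] =>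
      ‖(x.1 + x.2) * ((x.1 + x.2) - (p : ℤ_[p]) * x.2)‖ := by
    fun_prop
  have hintF : Integrable (fun x : ℤ_[p] × ℤ_[p] =>
      ‖(x.1 + x.2) * ((x.1 + x.2) - (p : ℤ_[p]) * x.2)‖) (μ.prod μ) :=
    pad_integrable _ hcontF
  rw [integral_prod_symm _ hintF]
  -- inner integral computation
  have key : ∀ x₂ : ℤ_[p], ∫ x₁, ‖(x₁ + x₂) * ((x₁ + x₂) - (p : ℤ_[p]) * x₂)‖ ∂μ
      = (1 - q⁻¹) + q⁻¹ * q⁻¹ * q⁻¹ * ∫ y, ‖y‖ * ‖y - x₂‖ ∂μ := by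
    intro x₂
    have t1 : ∫ x₁, ‖(x₁ + x₂) * ((x₁ + x₂) - (p : ℤ_[p]) * x₂)‖ ∂μ
        = ∫ x₁, ‖x₁ * (x₁ - (p : ℤ_[p]) * x₂)‖ ∂μ :=
      integral_add_right_eq_self (fun t => ‖t * (t - (p : ℤ_[p]) * x₂)‖) x₂
    rw [t1]
    have hint2 : Integrable (fun x₁ => ‖x₁ * (x₁ - (p : ℤ_[p]) * x₂)‖) μ :=
      pad_integrable _ (by fun_prop)
    rw [← integral_add_compl (padS_meas (p := p)) hint2]
    have hC : ∫ x₁ in (padS p)ᶜ, ‖x₁ * (x₁ - (p : ℤ_[p]) * x₂)‖ ∂μ = 1 - q⁻¹ := by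
      have heq : Set.EqOn (fun x₁ : ℤ_[p] => ‖x₁ * (x₁ - (p : ℤ_[p]) * x₂)‖)
          (fun _ => (1 : ℝ)) (padS p)ᶜ := by
        intro x hx
        have hx1 : ‖x‖ = 1 := le_antisymm (PadicInt.norm_le_one x) (not_lt.mp hx)
        have hpb : ‖(p : ℤ_[p]) * x₂‖ < 1 := by
          rw [norm_mul, PadicInt.norm_p]
          calc (p : ℝ)⁻¹ * ‖x₂‖ ≤ (p : ℝ)⁻¹ * 1 := by
                exact mul_le_mul_of_nonneg_left (PadicInt.norm_le_one x₂) (by positivity)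
            _ < 1 := by rw [mul_one]; exact inv_lt_one_of_one_lt₀ hp1
        simp only [norm_mul, hx1, one_mul,
          pad_norm_compl hx ((p : ℤ_[p]) * x₂) hpb]
      rw [setIntegral_congr_fun (padS_meas (p := p)).compl heq, setIntegral_const,
        measureReal_def, pad_compl_measure μ, smul_eq_mul, mul_one]
    have hS : ∫ x₁ in padS p, ‖x₁ * (x₁ - (p : ℤ_[p]) * x₂)‖ ∂μ
        = q⁻¹ * (q⁻¹ * q⁻¹ * ∫ y, ‖y‖ * ‖y - x₂‖ ∂μ) := by
      rw [pad_setIntegral μ]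
      congr 1
      have hy : ∀ y : ℤ_[p], ‖(p : ℤ_[p]) * y * ((p : ℤ_[p]) * y - (p : ℤ_[p]) * x₂)‖
          = q⁻¹ * q⁻¹ * (‖y‖ * ‖y - x₂‖) := by
        intro y
        rw [show (p : ℤ_[p]) * y - (p : ℤ_[p]) * x₂ = (p : ℤ_[p]) * (y - x₂) by ring,
          norm_mul, norm_mul, norm_mul, PadicInt.norm_p]
        ring
      simp only [hy]
      rw [integral_const_mul]
    rw [hC, hS]
    ring
  simp only [key]
  -- integrate over x₂
  have hK : Integrable (fun z : ℤ_[p] × ℤ_[p] => ‖z.2‖ * ‖z.2 - z.1‖) (μ.prod μ) :=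
    pad_integrable _ (by fun_prop)
  have hinth : Integrable (fun x₂ : ℤ_[p] => ∫ y, ‖y‖ * ‖y - x₂‖ ∂μ) μ := by
    have := hK.integral_prod_left
    simpa using this
  rw [integral_add (integrable_const _) (hinth.const_mul _), integral_const,
    integral_const_mul, measureReal_def, measure_univ, ENNReal.toReal_one, one_smul]
  -- the double integral equals A ^ 2
  have hdouble : ∫ x₂, (∫ y, ‖y‖ * ‖y - x₂‖ ∂μ) ∂μ = A * A := by
    have hswap := integral_integral_swap (f := fun x₂ y : ℤ_[p] => ‖y‖ * ‖y - x₂‖)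
      (μ := μ) (ν := μ) (by apply pad_integrable _ (by fun_prop))
    rw [hswap]
    have hin : ∀ y : ℤ_[p], ∫ x₂, ‖y‖ * ‖y - x₂‖ ∂μ = ‖y‖ * A := by
      intro y
      rw [integral_const_mul]
      congr 1
      have : ∀ x₂ : ℤ_[p], ‖y - x₂‖ = ‖x₂ - y‖ := fun x₂ => norm_sub_rev _ _
      simp only [this]
      exact integral_sub_right_eq_self (fun t => ‖t‖) y
    simp only [hin]
    rw [integral_mul_const]
  rw [hdouble, hA]
  have hq1 : q + 1 ≠ 0 := by positivity
  have hq0 : q ≠ 0 := ne_of_gt hp0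
  field_simp
  ring
end
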